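/- arXiv:1402.6250 — 4 statements merged into one kernel-verified Lean document; each statement's English description precedes it below -/
import Mathlib

section
/- Let C be a crystal framework in ℝ^d. Then the RUM spectrum is the union of the Bohr spectra of the almost periodic infinitesimal flexes of C: ω ∈ Ω(C) if and only if there exists an almost periodic infinitesimal flex u of C (viewed as a map ℤ^d → ℂ^{d|V₀|}) with [u, e_ω] ≠ 0. -/
open Filter

noncomputable section

/-- The multi-power `z^k = z₁^{k₁} ⋯ z_d^{k_d}` for `z ∈ ℂ^d`, `k ∈ ℤ^d`. -/
def zpowVec {d : ℕ} (z : Fin d → ℂ) (k : Fin d → ℤ) : ℂ := ∏ j, z j ^ (k j)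

/-- Membership in the `d`-torus `𝕋^d`. -/
def OnTorus {d : ℕ} (z : Fin d → ℂ) : Prop := ∀ j, ‖z j‖ = 1

/-- A crystal framework in `ℝ^d`: a finite motif of vertices `V` placed by `p`,
a full-rank translation lattice generated by `a₁, …, a_d`, and a finite set of
motif edges `E` with endpoints `fst e = (v, l)` and `snd e = (w, m)` standing for
the joints `p(v, l)` and `p(w, m)`.  Joints are pairwise distinct and edge vectors
are nonzero. -/
structure CrystalFramework (d : ℕ) where
  V : Type
  fintypeV : Fintype V
  decV : DecidableEq V
  E : Type
  fintypeE : Fintype E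
  p : V → Fin d → ℝ
  a : Fin d → Fin d → ℝ
  indep : LinearIndependent ℝ a
  fst : E → V × (Fin d → ℤ)
  snd : E → V × (Fin d → ℤ)
  joint_injective : Function.Injective
    (fun vk : V × (Fin d → ℤ) =>
      (fun i => p vk.1 i + ∑ j, (vk.2 j : ℝ) * a j i : Fin d → ℝ))
  edge_nonzero : ∀ e : E,
    (fun i => p (fst e).1 i + ∑ j, ((fst e).2 j : ℝ) * a j i : Fin d → ℝ) ≠
    (fun i => p (snd e).1 i + ∑ j, ((snd e).2 j : ℝ) * a j i)

attribute [instance] CrystalFramework.fintypeV CrystalFramework.decV CrystalFramework.fintypeE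

namespace CrystalFramework

variable {d : ℕ} (C : CrystalFramework d)

/-- The joint `p(v, k) = p(v) + k₁a₁ + ⋯ + k_d a_d`. -/
def joint (v : C.V) (k : Fin d → ℤ) : Fin d → ℝ :=
  fun i => C.p v i + ∑ j, (k j : ℝ) * C.a j i

/-- The edge vector `p(e) = p(v, l) - p(w, m)` for the motif edge `e = ((v,l),(w,m))`. -/
def edgeVec (e : C.E) : Fin d → ℝ :=
  fun i => C.joint (C.fst e).1 (C.fst e).2 i - C.joint (C.snd e).1 (C.snd e).2 i

/-- A complex velocity field `u` is an infinitesimal flex: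
`p(e) ⋅ (u(v, l+k) - u(w, m+k)) = 0` for every motif edge and every `k ∈ ℤ^d`. -/
def IsFlex (u : C.V × (Fin d → ℤ) → Fin d → ℂ) : Prop :=
  ∀ (e : C.E) (k : Fin d → ℤ),
    ∑ i, (C.edgeVec e i : ℂ) *
      (u ((C.fst e).1, fun j => (C.fst e).2 j + k j) i -
       u ((C.snd e).1, fun j => (C.snd e).2 j + k j) i) = 0

/-- A real velocity field `u` is an infinitesimal flex. -/
def IsRealFlex (u : C.V × (Fin d → ℤ) → Fin d → ℝ) : Prop :=
  ∀ (e : C.E) (k : Fin d → ℤ),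
    ∑ i, C.edgeVec e i *
      (u ((C.fst e).1, fun j => (C.fst e).2 j + k j) i -
       u ((C.snd e).1, fun j => (C.snd e).2 j + k j) i) = 0

/-- A complex velocity field is trivial if the flex condition holds for every pair of joints. -/
def IsTrivial (u : C.V × (Fin d → ℤ) → Fin d → ℂ) : Prop :=
  ∀ (v w : C.V) (k k' : Fin d → ℤ),
    ∑ i, ((C.joint v k i - C.joint w k' i : ℝ) : ℂ) * (u (v, k) i - u (w, k') i) = 0

/-- A real velocity field is trivial if the flex condition holds for every pair of joints. -/
def IsRealTrivial (u : C.V × (Fin d → ℤ) → Fin d → ℝ) : Prop :=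
  ∀ (v w : C.V) (k k' : Fin d → ℤ),
    ∑ i, (C.joint v k i - C.joint w k' i) * (u (v, k) i - u (w, k') i) = 0

/-- A complex velocity field is strictly periodic if `u(v,k) = u(v,0)`. -/
def StrictlyPeriodic (u : C.V × (Fin d → ℤ) → Fin d → ℂ) : Prop :=
  ∀ (v : C.V) (k : Fin d → ℤ), u (v, k) = u (v, 0)

/-- A real velocity field is strictly periodic if `u(v,k) = u(v,0)`. -/
def StrictlyPeriodicReal (u : C.V × (Fin d → ℤ) → Fin d → ℝ) : Prop :=
  ∀ (v : C.V) (k : Fin d → ℤ), u (v, k) = u (v, 0)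

/-- The `ω`-phase-periodic velocity field `b ⊗ e_ω : (v,k) ↦ ω^k b(v)`. -/
def phaseField (ω : Fin d → ℂ) (b : C.V → Fin d → ℂ) :
    C.V × (Fin d → ℤ) → Fin d → ℂ :=
  fun vk i => zpowVec ω vk.2 * b vk.1 i

/-- The symbol function `Φ_C(z)`: the row of the motif edge `e = ((v,l),(w,m))` has
entries `z̄^l p(e)` in the columns of `v` and `-z̄^m p(e)` in the columns of `w`
(in particular entries `(z̄^l - z̄^m) p(e)` in the columns of `v` when `v = w`). -/
def symbol (z : Fin d → ℂ) : Matrix C.E (C.V × Fin d) ℂ :=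
  Matrix.of fun e xi =>
    (C.edgeVec e xi.2 : ℂ) *
      ((if xi.1 = (C.fst e).1 then
          zpowVec (fun j => (starRingEnd ℂ) (z j)) (C.fst e).2 else 0) -
       (if xi.1 = (C.snd e).1 then
          zpowVec (fun j => (starRingEnd ℂ) (z j)) (C.snd e).2 else 0))

/-- The RUM spectrum `Ω(C)`: the set of `ω ∈ 𝕋^d` admitting a nonzero
`ω`-phase-periodic infinitesimal flex. -/
def RUM : Set (Fin d → ℂ) :=
  {ω | OnTorus ω ∧ ∃ b : C.V → Fin d → ℂ, b ≠ 0 ∧ C.IsFlex (C.phaseField ω b)}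

end CrystalFramework

/-- The box `{k ∈ ℤ^d : |k_j| ≤ N for all j}`. -/
def box (d : ℕ) (N : ℕ) : Finset (Fin d → ℤ) :=
  Fintype.piFinset fun _ => Finset.Icc (-(N : ℤ)) (N : ℤ)

/-- The average `(2N+1)^{-d} ∑_{|k_j| ≤ N} f(k)`. -/
def boxAvg {d : ℕ} (f : (Fin d → ℤ) → ℂ) (N : ℕ) : ℂ :=
  (((2 * N + 1 : ℕ) : ℂ) ^ d)⁻¹ * ∑ k ∈ box d N, f k

/-- `f : ℤ^d → ℂ` has mean value `L`. -/
def HasMean {d : ℕ} (f : (Fin d → ℤ) → ℂ) (L : ℂ) : Prop :=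
  Tendsto (boxAvg f) atTop (nhds L)

/-- The mean pairing `[h, g] = lim_N (2N+1)^{-d} ∑_{|k_j| ≤ N} h(k) ⬝ conj (g(k))`,
computed componentwise, has value `L`. -/
def HasMeanPairing {d : ℕ} {ι : Type} [Fintype ι]
    (h : (Fin d → ℤ) → ι → ℂ) (g : (Fin d → ℤ) → ℂ) (L : ι → ℂ) : Prop :=
  ∀ i, HasMean (fun k => h k i * (starRingEnd ℂ) (g k)) (L i)

/-- The pure frequency sequence `e_ω(k) = ω^k`. -/
def eOmega {d : ℕ} (ω : Fin d → ℂ) : (Fin d → ℤ) → ℂ := fun k => zpowVec ω k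

/-- Bohr almost periodicity for a bounded `h : ℤ^d → ℂ^ι`: for every `ε > 0`
there is `R > 0` such that every closed Euclidean ball of radius `R` in `ℝ^d`
contains an `ε`-translation vector `l` of `h`, i.e. `‖R_l h - h‖_∞ < ε`. -/
def IsBohrAP {d : ℕ} {ι : Type} [Fintype ι] (h : (Fin d → ℤ) → ι → ℂ) : Prop :=
  (∃ M : ℝ, ∀ k i, ‖h k i‖ ≤ M) ∧
  ∀ ε > (0 : ℝ), ∃ R > (0 : ℝ), ∀ c : Fin d → ℝ, ∃ l : Fin d → ℤ,
    Real.sqrt (∑ j, ((l j : ℝ) - c j) ^ 2) ≤ R ∧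
    ∀ k i, ‖h (fun j => k j - l j) i - h k i‖ < ε



/-! ### Auxiliary lemmas -/

section Aux

-- |e^{ix} - 1| ≤ |x|
lemma aux_abs_exp_I_sub_one_le (x : ℝ) : ‖Complex.exp (x * Complex.I) - 1‖ ≤ |x| := by
  have h1 : Complex.exp (x * Complex.I) - 1 = Complex.mk (Real.cos x - 1) (Real.sin x) := by
    rw [Complex.exp_mul_I]
    apply Complex.ext <;> simp [Complex.cos_ofReal_re, Complex.sin_ofReal_re]
  have h2 : ‖Complex.exp (x * Complex.I) - 1‖ ^ 2 = 2 - 2 * Real.cos x := by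
    rw [h1, Complex.sq_norm, Complex.normSq_mk]
    nlinarith [Real.sin_sq_add_cos_sq x]
  have hc : Real.cos (x/2) ^ 2 = 1/2 + Real.cos x / 2 := by
    have := Real.cos_sq (x/2); rwa [show 2 * (x/2) = x by ring] at this
  have h3 : 2 - 2 * Real.cos x = 4 * Real.sin (x/2) ^ 2 := by
    nlinarith [Real.sin_sq_add_cos_sq (x/2)]
  have h4 : |Real.sin (x/2)| ≤ |x/2| := Real.abs_sin_le_abs
  have hsq : Real.sin (x/2)^2 ≤ (x/2)^2 := by
    have := pow_le_pow_left₀ (abs_nonneg (Real.sin (x/2))) h4 2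
    simpa [sq_abs] using this
  have h5 : ‖Complex.exp (x * Complex.I) - 1‖ ^ 2 ≤ |x| ^ 2 := by
    rw [h2, h3, sq_abs]; nlinarith [hsq]
  nlinarith [norm_nonneg (Complex.exp (x * Complex.I) - 1), abs_nonneg x, h5]

-- Dirichlet-style pigeonhole
lemma aux_exists_good_pair (α : ℝ) {δ : ℝ} (hδ : 0 < δ) :
    ∃ q p : ℤ, 1 ≤ q ∧ |(q:ℝ) * α - p| < δ := by
  obtain ⟨K, hK⟩ := exists_nat_gt (1/δ)
  have hK0 : 0 < K := by
    by_contra h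
    push_neg at h
    interval_cases K
    simp at hK
    nlinarith [one_div_pos.mpr hδ]
  have hKR : (0:ℝ) < K := by exact_mod_cast hK0
  have hinv : 1/(K:ℝ) < δ := by
    rw [div_lt_iff₀ hKR]
    calc (1:ℝ) = (1/δ) * δ := by field_simp
    _ < K * δ := by nlinarith
    _ = δ * K := by ring
  have maps : ∀ i ∈ Finset.range (K+1),
      (⌊Int.fract ((i:ℝ) * α) * K⌋) ∈ Finset.Ico (0:ℤ) K := by
    intro i _
    rw [Finset.mem_Ico]
    constructor
    · exact Int.floor_nonneg.mpr (mul_nonneg (Int.fract_nonneg _) hKR.le)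
    · have : Int.fract ((i:ℝ) * α) * K < K := by
        nlinarith [Int.fract_lt_one ((i:ℝ) * α)]
      exact_mod_cast Int.floor_lt.mpr (by exact_mod_cast this)
  have hcard : (Finset.Ico (0:ℤ) K).card < (Finset.range (K+1)).card := by
    simp [Int.card_Ico]
  obtain ⟨a, ha, b, hb, hab, heq⟩ :=
    Finset.exists_ne_map_eq_of_card_lt_of_maps_to hcard maps
  wlog h : a < b generalizing a b
  · exact this b hb a ha hab.symm heq.symm (by omega)
  refine ⟨b - a, ⌊(b:ℝ)*α⌋ - ⌊(a:ℝ)*α⌋, by omega, ?_⟩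
  have e1 : (((b:ℤ) - (a:ℤ) : ℤ) : ℝ) * α - ((⌊(b:ℝ)*α⌋ - ⌊(a:ℝ)*α⌋ : ℤ) : ℝ)
      = Int.fract ((b:ℝ)*α) - Int.fract ((a:ℝ)*α) := by
    rw [Int.fract, Int.fract]; push_cast; ring
  rw [e1]
  have h1 : ((⌊Int.fract ((a:ℝ) * α) * K⌋ : ℤ):ℝ) ≤ Int.fract ((a:ℝ) * α) * K := Int.floor_le _
  have h2 : Int.fract ((a:ℝ) * α) * K < (⌊Int.fract ((a:ℝ) * α) * K⌋ : ℤ) + 1 :=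
    Int.lt_floor_add_one _
  have h3 : ((⌊Int.fract ((a:ℝ) * α) * K⌋ : ℤ):ℝ) ≤ Int.fract ((b:ℝ) * α) * K := by
    rw [heq]; exact Int.floor_le _
  have h4 : Int.fract ((b:ℝ) * α) * K < (⌊Int.fract ((a:ℝ) * α) * K⌋ : ℤ) + 1 := by
    rw [heq]; exact Int.lt_floor_add_one _
  have hd1 : (Int.fract ((b:ℝ)*α) - Int.fract ((a:ℝ)*α)) * K < 1 := by nlinarith
  have hd2 : (-1:ℝ) < (Int.fract ((b:ℝ)*α) - Int.fract ((a:ℝ)*α)) * K := by nlinarith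
  have habs : |Int.fract ((b:ℝ)*α) - Int.fract ((a:ℝ)*α)| < 1/K := by
    rw [lt_div_iff₀ hKR, show |Int.fract ((b:ℝ)*α) - Int.fract ((a:ℝ)*α)| * K
      = |(Int.fract ((b:ℝ)*α) - Int.fract ((a:ℝ)*α)) * K| by
        rw [abs_mul, abs_of_pos hKR], abs_lt]
    exact ⟨hd2, hd1⟩
  exact habs.trans hinv

-- relative density of near-integer multiples
lemma aux_syndetic_approx (α : ℝ) {δ : ℝ} (hδ : 0 < δ) :
    ∃ R > (0:ℝ), ∀ c : ℝ, ∃ n m : ℤ, |(n:ℝ) - c| ≤ R ∧ |(n:ℝ) * α - m| < δ := by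
  obtain ⟨q, p, hq, hqp⟩ := aux_exists_good_pair α (half_pos hδ)
  set β : ℝ := q * α - p with hβ
  have hqR : (0:ℝ) < q := by exact_mod_cast hq
  by_cases hb0 : β = 0
  · refine ⟨q, hqR, fun c => ?_⟩
    have hcq : (q:ℝ) * (c/q) = c := mul_div_cancel₀ c hqR.ne'
    refine ⟨q * ⌈c / q⌉, p * ⌈c / q⌉, ?_, ?_⟩
    · have h1 : c / q ≤ (⌈c / q⌉ : ℝ) := Int.le_ceil _
      have h2 : (⌈c / q⌉ : ℝ) < c / q + 1 := Int.ceil_lt_add_one _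
      rw [abs_le]
      constructor
      · push_cast
        nlinarith [mul_le_mul_of_nonneg_left h1 hqR.le]
      · push_cast
        nlinarith [mul_lt_mul_of_pos_left h2 hqR]
    · have : ((q * ⌈c / q⌉ : ℤ) : ℝ) * α - ((p * ⌈c / q⌉ : ℤ) : ℝ) = (⌈c / q⌉ : ℝ) * β := by
        rw [hβ]; push_cast; ring
      rw [this, hb0, mul_zero, abs_zero]
      exact hδ
  · refine ⟨(q : ℝ) * (1 / |β| + 2), by positivity, fun c => ?_⟩
    have hcq : (q:ℝ) * (c/q) = c := mul_div_cancel₀ c hqR.ne'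
    set t₀ : ℤ := ⌈c / q⌉ with ht₀
    set s : ℤ := ⌈(t₀ : ℝ) * β⌉ with hs
    set t : ℤ := ⌈(s : ℝ) / β⌉ with ht
    have hs1 : (t₀ : ℝ) * β ≤ s := Int.le_ceil _
    have hs2 : (s : ℝ) < t₀ * β + 1 := Int.ceil_lt_add_one _
    have ht1 : (s : ℝ) / β ≤ t := Int.le_ceil _
    have ht2 : (t : ℝ) < s / β + 1 := Int.ceil_lt_add_one _
    have hc1 : c / q ≤ (t₀ : ℝ) := Int.le_ceil _
    have hc2 : (t₀ : ℝ) < c / q + 1 := Int.ceil_lt_add_one _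
    have habs : |β| < δ / 2 := hqp
    have hbabs : 0 < |β| := abs_pos.mpr hb0
    have key : |(t:ℝ) * β - s| ≤ |β| ∧ |(t:ℝ) - t₀| ≤ 1 / |β| + 1 := by
      rcases lt_or_gt_of_ne hb0 with hneg | hpos
      · have p1 : (t:ℝ) * β ≤ s := by
          have := mul_le_mul_of_nonpos_right ht1 hneg.le
          rwa [div_mul_cancel₀ _ hb0] at this
        have p2 : (s:ℝ) + β < t * β := by
          have := mul_lt_mul_of_neg_right ht2 hneg
          rwa [add_mul, div_mul_cancel₀ _ hb0, one_mul] at this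
        have q1 : (t:ℝ) ≤ t₀ + 1 := by
          have : (s:ℝ)/β ≤ t₀ := by
            rw [div_le_iff_of_neg hneg]
            exact hs1
          linarith
        have hfs : ((t₀:ℝ) + 1/β) * β = t₀ * β + 1 := by field_simp
        have q2 : (t₀:ℝ) + 1/β < t := by
          have : (t₀:ℝ) + 1/β < s/β := by
            rw [lt_div_iff_of_neg hneg, hfs]
            exact hs2
          linarith
        constructor
        · rw [abs_le, abs_of_neg hneg]; constructor <;> linarith
        · rw [abs_le, abs_of_neg hneg]
          have h5 : 1/(-β) = -(1/β) := by field_simp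
          constructor
          · rw [h5]; linarith
          · linarith [one_div_pos.mpr (neg_pos.mpr hneg)]
      · have p1 : (s:ℝ) ≤ t * β := by
          have := mul_le_mul_of_nonneg_right ht1 hpos.le
          rwa [div_mul_cancel₀ _ hb0] at this
        have p2 : (t:ℝ) * β < s + β := by
          have := mul_lt_mul_of_pos_right ht2 hpos
          rwa [add_mul, div_mul_cancel₀ _ hb0, one_mul] at this
        have q1 : (t₀:ℝ) ≤ t := by
          have : (t₀:ℝ) ≤ s/β := by rw [le_div_iff₀ hpos]; exact hs1
          linarith
        have hfs : ((t₀:ℝ) + 1/β) * β = t₀ * β + 1 := by field_simp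
        have q2 : (t:ℝ) < t₀ + 1/β + 1 := by
          have : (s:ℝ)/β < t₀ + 1/β := by
            rw [div_lt_iff₀ hpos, hfs]
            exact hs2
          linarith
        constructor
        · rw [abs_le, abs_of_pos hpos]; constructor <;> linarith
        · rw [abs_le, abs_of_pos hpos]
          constructor
          · linarith [one_div_pos.mpr hpos]
          · linarith
    obtain ⟨k1, k2⟩ := key
    refine ⟨t * q, t * p + s, ?_, ?_⟩
    · have h1 : |(t:ℝ)*q - t₀*q| ≤ (1/|β|+1) * q := by
        rw [← sub_mul, abs_mul, abs_of_pos hqR]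
        exact mul_le_mul_of_nonneg_right k2 hqR.le
      have h2 : |(t₀:ℝ)*q - c| ≤ q := by
        rw [abs_le]
        constructor
        · nlinarith [mul_lt_mul_of_pos_right hc2 hqR]
        · nlinarith [mul_le_mul_of_nonneg_right hc1 hqR.le]
      calc |((t*q : ℤ):ℝ) - c| = |((t:ℝ)*q - t₀*q) + ((t₀:ℝ)*q - c)| := by push_cast; ring_nf
        _ ≤ |(t:ℝ)*q - t₀*q| + |(t₀:ℝ)*q - c| := abs_add_le _ _
        _ ≤ (1/|β|+1) * q + q := by linarith
        _ = (q:ℝ) * (1/|β| + 2) := by ring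
    · have e2 : ((t*q : ℤ):ℝ) * α - ((t*p + s : ℤ):ℝ) = (t:ℝ) * β - s := by
        rw [hβ]; push_cast; ring
      rw [e2]
      calc |(t:ℝ)*β - s| ≤ |β| := k1
        _ < δ/2 := habs
        _ < δ := by linarith

-- relative density of near-trivial powers on the circle
lemma aux_syndetic_circle (z : ℂ) (hz : ‖z‖ = 1) {δ : ℝ} (hδ : 0 < δ) :
    ∃ R > (0:ℝ), ∀ c : ℝ, ∃ n : ℤ, |(n:ℝ) - c| ≤ R ∧ ‖z ^ n - 1‖ < δ := by
  set θ := Complex.arg z with hθ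
  have hze : Complex.exp (θ * Complex.I) = z := by
    have := Complex.norm_mul_exp_arg_mul_I z
    rwa [hz, Complex.ofReal_one, one_mul] at this
  have h2π : (0:ℝ) < 2 * Real.pi := by positivity
  obtain ⟨R, hR, hsyn⟩ := aux_syndetic_approx (θ / (2 * Real.pi)) (div_pos hδ h2π)
  refine ⟨R, hR, fun c => ?_⟩
  obtain ⟨n, m, h1, h2⟩ := hsyn c
  refine ⟨n, h1, ?_⟩
  set x : ℝ := n * θ - 2 * Real.pi * m with hx
  have hxb : |x| < δ := by
    have : x = (2 * Real.pi) * ((n:ℝ) * (θ / (2 * Real.pi)) - m) := by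
      field_simp [hx]
      exact hx
    rw [this, abs_mul, abs_of_pos h2π]
    calc 2 * Real.pi * |(n:ℝ) * (θ / (2 * Real.pi)) - m| < 2 * Real.pi * (δ / (2 * Real.pi)) :=
          by exact mul_lt_mul_of_pos_left h2 h2π
      _ = δ := by field_simp
  have hpow : z ^ n = Complex.exp ((x:ℂ) * Complex.I) := by
    rw [← hze, ← Complex.exp_int_mul]
    rw [show ((n:ℂ) * (θ * Complex.I)) = (x:ℂ) * Complex.I + (m:ℂ) * (2 * Real.pi * Complex.I) by
      push_cast [hx]; ring]
    rw [Complex.exp_add, Complex.exp_int_mul_two_pi_mul_I, mul_one]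
  rw [hpow]
  exact lt_of_le_of_lt (aux_abs_exp_I_sub_one_le x) hxb

variable {d : ℕ} {ω : Fin d → ℂ}

lemma aux_torus_ne_zero (hω : OnTorus ω) (j : Fin d) : ω j ≠ 0 := by
  intro h
  have := hω j
  rw [h] at this
  simp at this

lemma aux_abs_zpowVec (hω : OnTorus ω) (k : Fin d → ℤ) : ‖zpowVec ω k‖ = 1 := by
  rw [zpowVec, norm_prod]
  rw [Finset.prod_eq_one]
  intro j _
  rw [norm_zpow, hω j, one_zpow]

lemma aux_zpowVec_ne_zero (hω : OnTorus ω) (k : Fin d → ℤ) : zpowVec ω k ≠ 0 := by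
  intro h
  have := aux_abs_zpowVec hω k
  rw [h] at this
  simp at this

lemma aux_zpowVec_add (hω : OnTorus ω) (k l : Fin d → ℤ) :
    zpowVec ω (fun j => k j + l j) = zpowVec ω k * zpowVec ω l := by
  rw [zpowVec, zpowVec, zpowVec, ← Finset.prod_mul_distrib]
  exact Finset.prod_congr rfl fun j _ => zpow_add₀ (aux_torus_ne_zero hω j) _ _

lemma aux_zpowVec_neg (l : Fin d → ℤ) :
    zpowVec ω (fun j => -(l j)) = (zpowVec ω l)⁻¹ := by
  rw [zpowVec, zpowVec, ← Finset.prod_inv_distrib]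
  exact Finset.prod_congr rfl fun j _ => zpow_neg _ _

lemma aux_zpowVec_mul_conj (hω : OnTorus ω) (k : Fin d → ℤ) :
    zpowVec ω k * (starRingEnd ℂ) (zpowVec ω k) = 1 := by
  rw [Complex.mul_conj, Complex.normSq_eq_norm_sq, aux_abs_zpowVec hω]
  norm_num

lemma aux_conj_zpowVec (hω : OnTorus ω) (k : Fin d → ℤ) :
    (starRingEnd ℂ) (zpowVec ω k) = (zpowVec ω k)⁻¹ := by
  have h := aux_zpowVec_mul_conj hω k
  have h0 := aux_zpowVec_ne_zero hω k
  field_simp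
  linear_combination h

lemma aux_abs_inv_sub_one {z : ℂ} (hz : ‖z‖ = 1) :
    ‖z⁻¹ - 1‖ = ‖z - 1‖ := by
  have hz0 : z ≠ 0 := by intro h; rw [h] at hz; simp at hz
  have h1 : z⁻¹ - 1 = z⁻¹ * (1 - z) := by field_simp
  rw [h1, norm_mul, norm_inv, hz, inv_one, one_mul, ← norm_neg]
  ring_nf

lemma aux_abs_prod_sub_one_le {ι : Type*} [DecidableEq ι] (s : Finset ι) (z : ι → ℂ)
    (h : ∀ j ∈ s, ‖z j‖ = 1) :
    ‖∏ j ∈ s, z j - 1‖ ≤ ∑ j ∈ s, ‖z j - 1‖ := by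
  induction s using Finset.induction with
  | empty => simp
  | @insert a s ha ih =>
    rw [Finset.prod_insert ha, Finset.sum_insert ha]
    have h1 : ∀ j ∈ s, ‖z j‖ = 1 := fun j hj => h j (Finset.mem_insert_of_mem hj)
    have ha1 : ‖z a‖ = 1 := h a (Finset.mem_insert_self a s)
    calc ‖z a * ∏ j ∈ s, z j - 1‖
        = ‖z a * (∏ j ∈ s, z j - 1) + (z a - 1)‖ := by ring_nf
      _ ≤ ‖z a * (∏ j ∈ s, z j - 1)‖ + ‖z a - 1‖ := norm_add_le _ _
      _ = ‖∏ j ∈ s, z j - 1‖ + ‖z a - 1‖ := by rw [norm_mul, ha1, one_mul]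
      _ ≤ (∑ j ∈ s, ‖z j - 1‖) + ‖z a - 1‖ := by linarith [ih h1]
      _ = ‖z a - 1‖ + ∑ j ∈ s, ‖z j - 1‖ := by ring

lemma aux_syndetic_zpowVec (hω : OnTorus ω) {δ : ℝ} (hδ : 0 < δ) :
    ∃ R > (0:ℝ), ∀ c : Fin d → ℝ, ∃ l : Fin d → ℤ,
      Real.sqrt (∑ j, ((l j : ℝ) - c j) ^ 2) ≤ R ∧ ‖zpowVec ω l - 1‖ < δ := by
  have hδ' : 0 < δ / (d + 1) := by positivity
  choose R hR hsyn using fun j => aux_syndetic_circle (ω j) (hω j) hδ'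
  have hRsum : (0:ℝ) ≤ ∑ j, R j := Finset.sum_nonneg fun j _ => (hR j).le
  refine ⟨(∑ j, R j) + 1, by linarith, fun c => ?_⟩
  choose l hl1 hl2 using fun j => hsyn j (c j)
  refine ⟨l, ?_, ?_⟩
  · have hsq : ∑ j, ((l j : ℝ) - c j) ^ 2 ≤ (∑ j, R j) ^ 2 := by
      calc ∑ j, ((l j : ℝ) - c j) ^ 2 ≤ ∑ j, (R j) ^ 2 := by
            apply Finset.sum_le_sum
            intro j _
            have := hl1 j
            nlinarith [abs_nonneg ((l j : ℝ) - c j), le_abs_self ((l j : ℝ) - c j),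
              neg_abs_le ((l j : ℝ) - c j)]
        _ ≤ (∑ j, R j) ^ 2 := Finset.sum_sq_le_sq_sum_of_nonneg fun j _ => (hR j).le
    calc Real.sqrt (∑ j, ((l j : ℝ) - c j) ^ 2) ≤ Real.sqrt ((∑ j, R j) ^ 2) :=
          Real.sqrt_le_sqrt hsq
      _ = |∑ j, R j| := Real.sqrt_sq_eq_abs _
      _ = ∑ j, R j := abs_of_nonneg hRsum
      _ ≤ (∑ j, R j) + 1 := by linarith
  · have hle : ‖zpowVec ω l - 1‖ ≤ ∑ j, ‖ω j ^ l j - 1‖ := by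
      apply aux_abs_prod_sub_one_le
      intro j _
      rw [norm_zpow, hω j, one_zpow]
    have hsum : ∑ j, ‖ω j ^ l j - 1‖ < δ := by
      calc ∑ j, ‖ω j ^ l j - 1‖ ≤ ∑ _j : Fin d, δ / (d+1) :=
            Finset.sum_le_sum fun j _ => (hl2 j).le
        _ = d * (δ / (d+1)) := by simp [Finset.sum_const]
        _ = δ * ((d:ℝ) / (d+1)) := by ring
        _ < δ * 1 := by
            apply mul_lt_mul_of_pos_left _ hδ
            rw [div_lt_one (by positivity : (0:ℝ) < (d:ℝ)+1)]
            linarith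
        _ = δ := mul_one δ
    exact lt_of_le_of_lt hle hsum

lemma aux_card_box (d N : ℕ) : (box d N).card = (2 * N + 1) ^ d := by
  rw [box, Fintype.card_piFinset]
  simp [Int.card_Icc]
  congr 1
  omega

lemma aux_mem_box {d N : ℕ} {k : Fin d → ℤ} : k ∈ box d N ↔ ∀ j, |k j| ≤ (N:ℤ) := by
  rw [box, Fintype.mem_piFinset]
  simp [Finset.mem_Icc, abs_le]

lemma aux_hasMean_const (c : ℂ) : HasMean (fun _ : Fin d → ℤ => c) c := by
  have : boxAvg (fun _ : Fin d → ℤ => c) = fun _ => c := by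
    funext N
    have h1 : ((2 * N + 1 : ℕ) : ℂ) ≠ 0 := Nat.cast_ne_zero.mpr (by omega)
    rw [boxAvg, Finset.sum_const, aux_card_box, nsmul_eq_mul, Nat.cast_pow]
    exact inv_mul_cancel_left₀ (pow_ne_zero _ h1) c
  rw [HasMean, this]
  exact tendsto_const_nhds

lemma aux_HasMean_add {f g : (Fin d → ℤ) → ℂ} {L M : ℂ}
    (hf : HasMean f L) (hg : HasMean g M) : HasMean (fun k => f k + g k) (L + M) := by
  have : boxAvg (fun k => f k + g k) = fun N => boxAvg f N + boxAvg g N := by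
    funext N
    rw [boxAvg, boxAvg, boxAvg, Finset.sum_add_distrib, mul_add]
  rw [HasMean, this]
  exact Filter.Tendsto.add hf hg

lemma aux_HasMean_const_mul {f : (Fin d → ℤ) → ℂ} {L : ℂ} (c : ℂ)
    (hf : HasMean f L) : HasMean (fun k => c * f k) (c * L) := by
  have : boxAvg (fun k => c * f k) = fun N => c * boxAvg f N := by
    funext N
    rw [boxAvg, boxAvg, ← Finset.mul_sum]
    ring
  rw [HasMean, this]
  exact Filter.Tendsto.const_mul c hf

lemma aux_HasMean_sub {f g : (Fin d → ℤ) → ℂ} {L M : ℂ}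
    (hf : HasMean f L) (hg : HasMean g M) : HasMean (fun k => f k - g k) (L - M) := by
  have h := aux_HasMean_add hf (aux_HasMean_const_mul (-1) hg)
  simp only [neg_one_mul] at h
  have e : (fun k => f k + -(g k)) = fun k => f k - g k := by funext k; ring
  rw [e] at h
  rwa [← sub_eq_add_neg] at h

lemma aux_HasMean_sum {ι : Type*} (s : Finset ι) (f : ι → (Fin d → ℤ) → ℂ) (L : ι → ℂ)
    (h : ∀ i ∈ s, HasMean (f i) (L i)) :
    HasMean (fun k => ∑ i ∈ s, f i k) (∑ i ∈ s, L i) := by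
  classical
  induction s using Finset.induction with
  | empty => simpa using aux_hasMean_const 0
  | @insert a s ha ih =>
    simp only [Finset.sum_insert ha]
    exact aux_HasMean_add (h a (Finset.mem_insert_self a s))
      (ih fun i hi => h i (Finset.mem_insert_of_mem hi))

lemma aux_HasMean_unique {f : (Fin d → ℤ) → ℂ} {L M : ℂ}
    (hf : HasMean f L) (hg : HasMean f M) : L = M :=
  tendsto_nhds_unique hf hg

lemma aux_abs_sum_sub_sum_le {A : Type*} [DecidableEq A] (S T B : Finset A) (hS : S ⊆ B)
    (hT : T ⊆ B) (f : A → ℂ) (M : ℝ) (hM : 0 ≤ M) (hf : ∀ a, ‖f a‖ ≤ M) :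
    ‖∑ a ∈ S, f a - ∑ a ∈ T, f a‖ ≤
      M * (((B.card : ℝ) - T.card) + ((B.card : ℝ) - S.card)) := by
  have key : ∑ a ∈ S, f a - ∑ a ∈ T, f a = ∑ a ∈ S \ T, f a - ∑ a ∈ T \ S, f a := by
    rw [← Finset.sum_inter_add_sum_sdiff S T f, ← Finset.sum_inter_add_sum_sdiff T S f,
      Finset.inter_comm]
    ring
  rw [key]
  have h1 : ‖∑ a ∈ S \ T, f a‖ ≤ M * (S \ T).card := by
    calc ‖∑ a ∈ S \ T, f a‖ ≤ ∑ a ∈ S \ T, ‖f a‖ :=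
          norm_sum_le _ _
      _ ≤ ∑ _a ∈ S \ T, M := Finset.sum_le_sum fun a _ => hf a
      _ = M * (S \ T).card := by rw [Finset.sum_const, nsmul_eq_mul]; ring
  have h2 : ‖∑ a ∈ T \ S, f a‖ ≤ M * (T \ S).card := by
    calc ‖∑ a ∈ T \ S, f a‖ ≤ ∑ a ∈ T \ S, ‖f a‖ :=
          norm_sum_le _ _
      _ ≤ ∑ _a ∈ T \ S, M := Finset.sum_le_sum fun a _ => hf a
      _ = M * (T \ S).card := by rw [Finset.sum_const, nsmul_eq_mul]; ring
  have hST : ((S \ T).card : ℝ) ≤ (B.card : ℝ) - T.card := by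
    have hsub : S \ T ⊆ B \ T := Finset.sdiff_subset_sdiff hS (le_refl T)
    have := Finset.card_le_card hsub
    rw [Finset.card_sdiff_of_subset hT] at this
    have hTB := Finset.card_le_card hT
    rw [← Nat.cast_sub hTB]
    exact_mod_cast this
  have hTS : ((T \ S).card : ℝ) ≤ (B.card : ℝ) - S.card := by
    have hsub : T \ S ⊆ B \ S := Finset.sdiff_subset_sdiff hT (le_refl S)
    have := Finset.card_le_card hsub
    rw [Finset.card_sdiff_of_subset hS] at this
    have hSB := Finset.card_le_card hS
    rw [← Nat.cast_sub hSB]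
    exact_mod_cast this
  have h0 : ‖∑ a ∈ S \ T, f a - ∑ a ∈ T \ S, f a‖ ≤
      ‖∑ a ∈ S \ T, f a‖ + ‖∑ a ∈ T \ S, f a‖ := by
    simpa [sub_eq_add_neg] using norm_add_le (∑ a ∈ S \ T, f a) (-∑ a ∈ T \ S, f a)
  have m1 := mul_le_mul_of_nonneg_left hST hM
  have m2 := mul_le_mul_of_nonneg_left hTS hM
  nlinarith [h0, h1, h2]

lemma aux_hasMean_shift {f : (Fin d → ℤ) → ℂ} {L : ℂ} {M : ℝ} (hM : 0 ≤ M)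
    (hf : ∀ k, ‖f k‖ ≤ M) (h : HasMean f L) (l : Fin d → ℤ) :
    HasMean (fun k => f (fun j => k j + l j)) L := by
  classical
  set m : ℕ := ∑ j, (l j).natAbs with hm
  have hlm : ∀ j, (l j).natAbs ≤ m := by
    intro j
    exact Finset.single_le_sum (f := fun j => (l j).natAbs) (fun i _ => Nat.zero_le _)
      (Finset.mem_univ j)
  have key : ∀ N : ℕ, ‖boxAvg (fun k => f (fun j => k j + l j)) N - boxAvg f N‖
      ≤ (((2*N+1:ℕ):ℝ)^d)⁻¹ * (M * (2 * (((2*(N+m)+1:ℕ):ℝ)^d - ((2*N+1:ℕ):ℝ)^d))) := by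
    intro N
    set S : Finset (Fin d → ℤ) := (box d N).image (fun k => fun j => k j + l j) with hS
    have hinj : Set.InjOn (fun k : Fin d → ℤ => fun j => k j + l j) (box d N) := by
      intro x _ y _ hxy
      funext j
      have := congrFun hxy j
      simpa using this
    have hsum : ∑ k ∈ box d N, f (fun j => k j + l j) = ∑ k ∈ S, f k := by
      rw [hS, Finset.sum_image]
      intro x hx y hy hxy
      exact hinj hx hy hxy
    have hScard : S.card = (2*N+1)^d := by
      rw [hS, Finset.card_image_of_injOn hinj, aux_card_box]
    have hSsub : S ⊆ box d (N+m) := by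
      intro x hx
      rw [hS, Finset.mem_image] at hx
      obtain ⟨k, hk, rfl⟩ := hx
      rw [aux_mem_box] at hk ⊢
      intro j
      have h1 := hk j
      have h2 : |l j| ≤ (m:ℤ) := by
        rw [Int.abs_eq_natAbs]
        exact_mod_cast hlm j
      calc |k j + l j| ≤ |k j| + |l j| := abs_add_le _ _
        _ ≤ N + m := by push_cast; omega
    have hBsub : box d N ⊆ box d (N+m) := by
      intro x hx
      rw [aux_mem_box] at hx ⊢
      intro j
      have := hx j
      omega
    have e1 : boxAvg (fun k => f (fun j => k j + l j)) N - boxAvg f N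
        = (((2*N+1:ℕ):ℂ)^d)⁻¹ * (∑ k ∈ S, f k - ∑ k ∈ box d N, f k) := by
      rw [boxAvg, boxAvg, hsum]
      ring
    rw [e1, norm_mul, norm_inv, norm_pow]
    have habs : ‖((2*N+1:ℕ):ℂ)‖ = ((2*N+1:ℕ):ℝ) := by
      rw [Complex.norm_natCast]
    rw [habs]
    apply mul_le_mul_of_nonneg_left _ (by positivity)
    have := aux_abs_sum_sub_sum_le S (box d N) (box d (N+m)) hSsub hBsub f M hM hf
    rw [aux_card_box, aux_card_box, hScard] at this
    calc ‖∑ k ∈ S, f k - ∑ k ∈ box d N, f k‖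
        ≤ M * ((((2*(N+m)+1)^d:ℕ):ℝ) - (((2*N+1)^d:ℕ):ℝ)
            + ((((2*(N+m)+1)^d:ℕ):ℝ) - (((2*N+1)^d:ℕ):ℝ))) := this
      _ = M * (2 * (((2*(N+m)+1:ℕ):ℝ)^d - ((2*N+1:ℕ):ℝ)^d)) := by push_cast; ring
  have heps : Filter.Tendsto (fun N : ℕ =>
      (((2*N+1:ℕ):ℝ)^d)⁻¹ * (M * (2 * (((2*(N+m)+1:ℕ):ℝ)^d - ((2*N+1:ℕ):ℝ)^d))))
      Filter.atTop (nhds 0) := by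
    have hrw : ∀ N : ℕ, (((2*N+1:ℕ):ℝ)^d)⁻¹ *
        (M * (2 * (((2*(N+m)+1:ℕ):ℝ)^d - ((2*N+1:ℕ):ℝ)^d)))
        = 2 * M * ((1 + (2*m:ℝ)/((2*N+1:ℕ):ℝ))^d - 1) := by
      intro N
      have hne : ((2*N+1:ℕ):ℝ) ≠ 0 := Nat.cast_ne_zero.mpr (by omega)
      have e2 : (1 + (2*m:ℝ)/((2*N+1:ℕ):ℝ)) = ((2*(N+m)+1:ℕ):ℝ)/((2*N+1:ℕ):ℝ) := by
        field_simp
        push_cast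
        ring
      rw [e2, div_pow]
      field_simp
    simp only [hrw]
    have h1 : Filter.Tendsto (fun N : ℕ => (2*m:ℝ)/((2*N+1:ℕ):ℝ)) Filter.atTop (nhds 0) := by
      apply Filter.Tendsto.div_atTop (tendsto_const_nhds)
      apply tendsto_atTop_mono (fun N : ℕ => ?_) tendsto_natCast_atTop_atTop
      push_cast
      linarith
    have h2 : Filter.Tendsto (fun N : ℕ => (1 + (2*m:ℝ)/((2*N+1:ℕ):ℝ))^d)
        Filter.atTop (nhds 1) := by
      have h2' : Filter.Tendsto (fun N : ℕ => 1 + (2*m:ℝ)/((2*N+1:ℕ):ℝ))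
          Filter.atTop (nhds (1 + 0)) :=
        Filter.Tendsto.add (tendsto_const_nhds (x := (1:ℝ))) h1
      have := h2'.pow d
      simpa using this
    have h3 : Filter.Tendsto (fun N : ℕ => 2 * M * ((1 + (2*m:ℝ)/((2*N+1:ℕ):ℝ))^d - 1))
        Filter.atTop (nhds (2 * M * (1 - 1))) :=
      Filter.Tendsto.const_mul (2*M) (h2.sub (tendsto_const_nhds (x := (1:ℝ))))
    simpa using h3
  have hdiff : Filter.Tendsto
      (fun N => boxAvg (fun k => f (fun j => k j + l j)) N - boxAvg f N)
      Filter.atTop (nhds 0) := by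
    apply squeeze_zero_norm key heps
  have := hdiff.add h
  rw [HasMean]
  simpa using this

end Aux

set_option maxHeartbeats 2000000 in
/-- The RUM spectrum is the union of the Bohr spectra of the
almost periodic infinitesimal flexes of `C`: a point `ω ∈ 𝕋^d` lies in `Ω(C)` iff
there is an almost periodic infinitesimal flex `u` of `C` with `[u, e_ω] ≠ 0`. -/
theorem RUM_eq_union_bohrSpectra {d : ℕ} (C : CrystalFramework d)
    (ω : Fin d → ℂ) (hω : OnTorus ω) :
    ω ∈ C.RUM ↔
      ∃ u : C.V × (Fin d → ℤ) → Fin d → ℂ,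
        C.IsFlex u ∧
        IsBohrAP (fun k (vi : C.V × Fin d) => u (vi.1, k) vi.2) ∧
        ∃ L : C.V × Fin d → ℂ, L ≠ 0 ∧
          HasMeanPairing (fun k (vi : C.V × Fin d) => u (vi.1, k) vi.2)
            (eOmega ω) L := by
  constructor
  · rintro ⟨hT, b, hb, hflex⟩
    refine ⟨C.phaseField ω b, hflex, ?_, ?_⟩
    · -- Bohr almost periodicity of the phase-periodic field
      set B : ℝ := ∑ p : C.V × Fin d, ‖b p.1 p.2‖ with hB
      have hB0 : 0 ≤ B := Finset.sum_nonneg fun p _ => norm_nonneg _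
      have hble : ∀ v i, ‖b v i‖ ≤ B := by
        intro v i
        exact Finset.single_le_sum (f := fun p : C.V × Fin d => ‖b p.1 p.2‖)
          (fun p _ => norm_nonneg _) (Finset.mem_univ (v, i))
      constructor
      · refine ⟨B, fun k vi => ?_⟩
        simp only [CrystalFramework.phaseField]
        rw [norm_mul, aux_abs_zpowVec hω, one_mul]
        exact hble vi.1 vi.2
      · intro ε hε
        have hδ : 0 < ε / (B + 1) := by positivity
        obtain ⟨R, hR, hsyn⟩ := aux_syndetic_zpowVec hω hδ
        refine ⟨R, hR, fun c => ?_⟩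
        obtain ⟨l, hl1, hl2⟩ := hsyn c
        refine ⟨l, hl1, fun k vi => ?_⟩
        simp only [CrystalFramework.phaseField]
        have e1 : zpowVec ω (fun j => k j - l j) * b vi.1 vi.2
            - zpowVec ω k * b vi.1 vi.2
            = zpowVec ω k * (((zpowVec ω l)⁻¹ - 1) * b vi.1 vi.2) := by
          have hidx : (fun j => k j - l j) = (fun j => k j + -(l j)) := by
            funext j; ring
          rw [hidx, aux_zpowVec_add hω k (fun j => -(l j)), aux_zpowVec_neg]
          ring
        rw [e1, norm_mul, norm_mul, aux_abs_zpowVec hω, one_mul,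
          aux_abs_inv_sub_one (aux_abs_zpowVec hω l)]
        calc ‖zpowVec ω l - 1‖ * ‖b vi.1 vi.2‖
            ≤ (ε/(B+1)) * B :=
              mul_le_mul hl2.le (hble vi.1 vi.2) (norm_nonneg _) hδ.le
          _ < ε/(B+1) * (B+1) := by nlinarith
          _ = ε := by field_simp
    · -- the mean pairing is b itself
      refine ⟨fun vi => b vi.1 vi.2, ?_, ?_⟩
      · intro h0
        apply hb
        funext v i
        have := congrFun h0 (v, i)
        simpa using this
      · intro vi
        have he : (fun k => C.phaseField ω b (vi.1, k) vi.2 * (starRingEnd ℂ) (eOmega ω k))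
            = fun _ => b vi.1 vi.2 := by
          funext k
          simp only [CrystalFramework.phaseField, eOmega]
          calc zpowVec ω k * b vi.1 vi.2 * (starRingEnd ℂ) (zpowVec ω k)
              = (zpowVec ω k * (starRingEnd ℂ) (zpowVec ω k)) * b vi.1 vi.2 := by ring
            _ = b vi.1 vi.2 := by rw [aux_zpowVec_mul_conj hω, one_mul]
        show HasMean (fun k => C.phaseField ω b (vi.1, k) vi.2 * (starRingEnd ℂ) (eOmega ω k))
          (b vi.1 vi.2)
        rw [he]
        exact aux_hasMean_const _
  · rintro ⟨u, hflex, ⟨⟨M, hMb⟩, _hap⟩, L, hL, hmean⟩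
    have hM'0 : (0:ℝ) ≤ max M 0 := le_max_right _ _
    have hub : ∀ (k : Fin d → ℤ) (v : C.V) (i : Fin d),
        ‖u (v, k) i‖ ≤ max M 0 := fun k v i =>
      le_trans (hMb k (v, i)) (le_max_left _ _)
    have hbne : (fun (v : C.V) (i : Fin d) => L (v, i)) ≠ 0 := by
      intro hb0
      apply hL
      funext p
      have := congrFun (congrFun hb0 p.1) p.2
      simpa using this
    -- the shifted, rotated means
    have hg : ∀ (v : C.V) (l : Fin d → ℤ) (i : Fin d),
        HasMean (fun k => u (v, fun j => l j + k j) i * (starRingEnd ℂ) (eOmega ω k))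
          (zpowVec ω l * L (v, i)) := by
      intro v l i
      have hf1 : ∀ k, ‖u (v, k) i * (starRingEnd ℂ) (eOmega ω k)‖ ≤ max M 0 := by
        intro k
        rw [norm_mul]
        have h1 : ‖(starRingEnd ℂ) (eOmega ω k)‖ = 1 := by
          rw [Complex.norm_conj]
          exact aux_abs_zpowVec hω k
        rw [h1, mul_one]
        exact hub k v i
      have h0 := hmean (v, i)
      have hsh := aux_hasMean_shift hM'0 hf1 h0 l
      have hsm := aux_HasMean_const_mul (zpowVec ω l) hsh
      have efun : (fun k => u (v, fun j => l j + k j) i * (starRingEnd ℂ) (eOmega ω k))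
          = (fun k => zpowVec ω l * (u (v, fun j => k j + l j) i *
              (starRingEnd ℂ) (eOmega ω (fun j => k j + l j)))) := by
        funext k
        have hidx : ((fun j => l j + k j) : Fin d → ℤ) = fun j => k j + l j := by
          funext j; exact add_comm _ _
        rw [hidx]
        show u (v, fun j => k j + l j) i * (starRingEnd ℂ) (zpowVec ω k)
          = zpowVec ω l * (u (v, fun j => k j + l j) i *
              (starRingEnd ℂ) (zpowVec ω (fun j => k j + l j)))
        rw [aux_zpowVec_add hω, map_mul]
        have hc := aux_zpowVec_mul_conj hω l
        linear_combination -(u (v, fun j => k j + l j) i * (starRingEnd ℂ) (zpowVec ω k)) * hc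
      rw [efun]
      exact hsm
    refine ⟨hω, fun v i => L (v, i), hbne, ?_⟩
    intro e k
    have hA : ∑ i, (C.edgeVec e i : ℂ) *
        (zpowVec ω (C.fst e).2 * L ((C.fst e).1, i)
          - zpowVec ω (C.snd e).2 * L ((C.snd e).1, i)) = 0 := by
      have hFmean : HasMean (fun k => ∑ i, (C.edgeVec e i : ℂ) *
          ((u ((C.fst e).1, fun j => (C.fst e).2 j + k j) i
            - u ((C.snd e).1, fun j => (C.snd e).2 j + k j) i) * (starRingEnd ℂ) (eOmega ω k)))
          (∑ i, (C.edgeVec e i : ℂ) *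
            (zpowVec ω (C.fst e).2 * L ((C.fst e).1, i)
              - zpowVec ω (C.snd e).2 * L ((C.snd e).1, i))) := by
        apply aux_HasMean_sum
        intro i _
        apply aux_HasMean_const_mul
        have hsub := aux_HasMean_sub (hg (C.fst e).1 (C.fst e).2 i) (hg (C.snd e).1 (C.snd e).2 i)
        have e3 : (fun k => (u ((C.fst e).1, fun j => (C.fst e).2 j + k j) i
              - u ((C.snd e).1, fun j => (C.snd e).2 j + k j) i) * (starRingEnd ℂ) (eOmega ω k))
            = fun k => u ((C.fst e).1, fun j => (C.fst e).2 j + k j) i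
                * (starRingEnd ℂ) (eOmega ω k)
              - u ((C.snd e).1, fun j => (C.snd e).2 j + k j) i
                * (starRingEnd ℂ) (eOmega ω k) := by
          funext k; ring
        rw [e3]
        exact hsub
      have hFzero : (fun k => ∑ i, (C.edgeVec e i : ℂ) *
          ((u ((C.fst e).1, fun j => (C.fst e).2 j + k j) i
            - u ((C.snd e).1, fun j => (C.snd e).2 j + k j) i) * (starRingEnd ℂ) (eOmega ω k)))
          = fun _ => (0:ℂ) := by
        funext k'
        have hfl := hflex e k'
        calc ∑ i, (C.edgeVec e i : ℂ) *
            ((u ((C.fst e).1, fun j => (C.fst e).2 j + k' j) i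
              - u ((C.snd e).1, fun j => (C.snd e).2 j + k' j) i) * (starRingEnd ℂ) (eOmega ω k'))
            = (∑ i, (C.edgeVec e i : ℂ) *
              (u ((C.fst e).1, fun j => (C.fst e).2 j + k' j) i
                - u ((C.snd e).1, fun j => (C.snd e).2 j + k' j) i))
              * (starRingEnd ℂ) (eOmega ω k') := by
              rw [Finset.sum_mul]
              exact Finset.sum_congr rfl fun i _ => by ring
          _ = 0 := by rw [hfl, zero_mul]
      rw [hFzero] at hFmean
      exact aux_HasMean_unique hFmean (aux_hasMean_const 0)
    simp only [CrystalFramework.phaseField]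
    calc ∑ i, (C.edgeVec e i : ℂ) *
        (zpowVec ω (fun j => (C.fst e).2 j + k j) * L ((C.fst e).1, i)
          - zpowVec ω (fun j => (C.snd e).2 j + k j) * L ((C.snd e).1, i))
        = ∑ i, zpowVec ω k * ((C.edgeVec e i : ℂ) *
            (zpowVec ω (C.fst e).2 * L ((C.fst e).1, i)
              - zpowVec ω (C.snd e).2 * L ((C.snd e).1, i))) := by
          refine Finset.sum_congr rfl fun i _ => ?_
          rw [aux_zpowVec_add hω (C.fst e).2 k, aux_zpowVec_add hω (C.snd e).2 k]
          ring
      _ = zpowVec ω k * ∑ i, (C.edgeVec e i : ℂ) *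
            (zpowVec ω (C.fst e).2 * L ((C.fst e).1, i)
              - zpowVec ω (C.snd e).2 * L ((C.snd e).1, i)) := by rw [Finset.mul_sum]
      _ = 0 := by rw [hA, mul_zero]
end
end

section
/- Let C be the triangulated crystal framework in ℝ² with one motif vertex v placed at the origin, lattice vectors a₁ = (1,0) and a₂ = (1/2, √3/2), and motif edges ((v,(0,0)),(v,(1,0))), ((v,(1,0)),(v,(0,1))) and ((v,(0,0)),(v,(0,1))); thus the joints are the points k₁a₁ + k₂a₂, k ∈ ℤ², and each joint is joined by bars to its six nearest neighbours. Then C is infinitesimally rigid: every real infinitesimal flex u : ℤ² → ℝ² of C is trivial. -/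
open Filter

noncomputable section

lemma affine_of_shift (f : (Fin 2 → ℤ) → ℝ) (c₁ c₂ : ℝ)
    (h1 : ∀ k : Fin 2 → ℤ, f (fun j => ![1, 0] j + k j) = f k + c₁)
    (h2 : ∀ k : Fin 2 → ℤ, f (fun j => ![0, 1] j + k j) = f k + c₂) :
    ∀ k : Fin 2 → ℤ, f k = f 0 + c₁ * k 0 + c₂ * k 1 := by
  have st1 : ∀ m n : ℤ, f ![m + 1, n] = f ![m, n] + c₁ := by
    intro m n
    have h := h1 ![m, n]
    have e : (fun j => ![(1 : ℤ), 0] j + ![m, n] j) = ![m + 1, n] := by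
      funext j; fin_cases j <;> simp [add_comm]
    rwa [e] at h
  have st2 : ∀ m n : ℤ, f ![m, n + 1] = f ![m, n] + c₂ := by
    intro m n
    have h := h2 ![m, n]
    have e : (fun j => ![(0 : ℤ), 1] j + ![m, n] j) = ![m, n + 1] := by
      funext j; fin_cases j <;> simp [add_comm]
    rwa [e] at h
  have l2 : ∀ n : ℤ, f ![0, n] = f ![0, 0] + c₂ * n := by
    intro n
    induction n using Int.induction_on with
    | zero => simp
    | succ i ih => push_cast; linear_combination ih + st2 0 i
    | pred i ih =>
        have h := st2 0 (-(i : ℤ) - 1)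
        have e : (-(i : ℤ) - 1 + 1) = -(i : ℤ) := by ring
        rw [e] at h
        push_cast at ih ⊢
        linear_combination ih - h
  have l1 : ∀ m n : ℤ, f ![m, n] = f ![0, n] + c₁ * m := by
    intro m n
    induction m using Int.induction_on with
    | zero => simp
    | succ i ih => push_cast; linear_combination ih + st1 i n
    | pred i ih =>
        have h := st1 (-(i : ℤ) - 1) n
        have e : (-(i : ℤ) - 1 + 1) = -(i : ℤ) := by ring
        rw [e] at h
        push_cast at ih ⊢
        linear_combination ih - h
  intro k
  have hk : k = ![k 0, k 1] := by funext j; fin_cases j <;> rfl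
  have hfk : f k = f ![k 0, k 1] := by rw [← hk]
  have hf0 : f 0 = f ![0, 0] := by
    congr 1; funext j; fin_cases j <;> rfl
  linear_combination hfk + l1 (k 0) (k 1) + l2 (k 1) - hf0


/-- The triangulated crystal framework (single motif vertex at the
origin, lattice vectors `(1,0)` and `(1/2, √3/2)`, each joint joined to its six
nearest neighbours) is infinitesimally rigid: every real infinitesimal flex is
trivial. -/
theorem triangulated_infinitesimally_rigid
    (C : CrystalFramework 2) (v₀ : C.V) (hv : ∀ v : C.V, v = v₀)
    (hp : C.p v₀ = 0)
    (ha0 : C.a 0 = ![1, 0]) (ha1 : C.a 1 = ![1 / 2, Real.sqrt 3 / 2])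
    (eE : C.E ≃ Fin 3)
    (he0 : C.fst (eE.symm 0) = (v₀, 0) ∧ C.snd (eE.symm 0) = (v₀, ![1, 0]))
    (he1 : C.fst (eE.symm 1) = (v₀, ![1, 0]) ∧ C.snd (eE.symm 1) = (v₀, ![0, 1]))
    (he2 : C.fst (eE.symm 2) = (v₀, 0) ∧ C.snd (eE.symm 2) = (v₀, ![0, 1])) :
    ∀ u : C.V × (Fin 2 → ℤ) → Fin 2 → ℝ,
      C.IsRealFlex u → C.IsRealTrivial u := by
  intro u hu
  set s3 := Real.sqrt 3 with hs3def
  have hs3 : (0 : ℝ) < s3 := Real.sqrt_pos.mpr (by norm_num)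
  have hs3ne : s3 ≠ 0 := ne_of_gt hs3
  -- joints in coordinates
  have hj0 : ∀ k : Fin 2 → ℤ, C.joint v₀ k 0 = (k 0 : ℝ) + (k 1 : ℝ) / 2 := by
    intro k
    simp [CrystalFramework.joint, hp, Fin.sum_univ_two, ha0, ha1]
    ring
  have hj1 : ∀ k : Fin 2 → ℤ, C.joint v₀ k 1 = (k 1 : ℝ) * (s3 / 2) := by
    intro k
    simp [CrystalFramework.joint, hp, Fin.sum_univ_two, ha0, ha1]
  -- edge vectors
  have hev00 : C.edgeVec (eE.symm 0) 0 = -1 := by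
    simp only [CrystalFramework.edgeVec, he0.1, he0.2]
    rw [hj0, hj0]; norm_num
  have hev01 : C.edgeVec (eE.symm 0) 1 = 0 := by
    simp only [CrystalFramework.edgeVec, he0.1, he0.2]
    rw [hj1, hj1]; norm_num
  have hev10 : C.edgeVec (eE.symm 1) 0 = 1 / 2 := by
    simp only [CrystalFramework.edgeVec, he1.1, he1.2]
    rw [hj0, hj0]; norm_num
  have hev11 : C.edgeVec (eE.symm 1) 1 = -(s3 / 2) := by
    simp only [CrystalFramework.edgeVec, he1.1, he1.2]
    rw [hj1, hj1]; norm_num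
  have hev20 : C.edgeVec (eE.symm 2) 0 = -(1 / 2) := by
    simp only [CrystalFramework.edgeVec, he2.1, he2.2]
    rw [hj0, hj0]; norm_num
  have hev21 : C.edgeVec (eE.symm 2) 1 = -(s3 / 2) := by
    simp only [CrystalFramework.edgeVec, he2.1, he2.2]
    rw [hj1, hj1]; norm_num
  -- raw flex equations
  have raw0 : ∀ k : Fin 2 → ℤ,
      u (v₀, fun j => ![1, 0] j + k j) 0 = u (v₀, k) 0 := by
    intro k
    have h := hu (eE.symm 0) k
    rw [Fin.sum_univ_two, he0.1, he0.2, hev00, hev01] at h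
    simp only [Pi.zero_apply, zero_add] at h
    linarith
  have raw1 : ∀ k : Fin 2 → ℤ,
      (1 / 2) * (u (v₀, fun j => ![1, 0] j + k j) 0 - u (v₀, fun j => ![0, 1] j + k j) 0)
      - (s3 / 2) * (u (v₀, fun j => ![1, 0] j + k j) 1 - u (v₀, fun j => ![0, 1] j + k j) 1)
      = 0 := by
    intro k
    have h := hu (eE.symm 1) k
    rw [Fin.sum_univ_two, he1.1, he1.2, hev10, hev11] at h
    linarith
  have raw2 : ∀ k : Fin 2 → ℤ,
      -(1 / 2) * (u (v₀, k) 0 - u (v₀, fun j => ![0, 1] j + k j) 0)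
      - (s3 / 2) * (u (v₀, k) 1 - u (v₀, fun j => ![0, 1] j + k j) 1)
      = 0 := by
    intro k
    have h := hu (eE.symm 2) k
    rw [Fin.sum_univ_two, he2.1, he2.2, hev20, hev21] at h
    simp only [Pi.zero_apply, zero_add] at h
    linarith
  -- derived equations
  have hE2 : ∀ k : Fin 2 → ℤ,
      u (v₀, k) 0 - u (v₀, fun j => ![0, 1] j + k j) 0
      = s3 * (u (v₀, fun j => ![0, 1] j + k j) 1 - u (v₀, k) 1) := by
    intro k
    linear_combination (-2 : ℝ) * raw2 k
  have hG : ∀ k : Fin 2 → ℤ,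
      u (v₀, fun j => ![1, 0] j + k j) 1 - u (v₀, k) 1
      = 2 * (u (v₀, fun j => ![0, 1] j + k j) 1 - u (v₀, k) 1) := by
    intro k
    have key : s3 * ((u (v₀, fun j => ![1, 0] j + k j) 1 - u (v₀, k) 1)
        - 2 * (u (v₀, fun j => ![0, 1] j + k j) 1 - u (v₀, k) 1)) = 0 := by
      linear_combination (-2 : ℝ) * raw1 k + (-2 : ℝ) * raw2 k + raw0 k
    rcases mul_eq_zero.mp key with h | h
    · exact absurd h hs3ne
    · linarith
  -- commutation of shifts
  have hcomm : ∀ k : Fin 2 → ℤ,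
      (fun j => ![(0 : ℤ), 1] j + (![1, 0] j + k j)) = (fun j => ![(1 : ℤ), 0] j + (![0, 1] j + k j)) := by
    intro k; funext j; ring
  -- second differences of the first coordinate vanish
  have hD := affine_of_shift
    (fun k => u (v₀, k) 0 - u (v₀, fun j => ![0, 1] j + k j) 0) 0 0
    (by
      intro k
      have h1 := raw0 k
      have h2 := raw0 (fun j => ![0, 1] j + k j)
      simp only at h1 h2 ⊢
      rw [hcomm k]
      linarith)
    (by
      intro k
      have e1 := hE2 k
      have e2 := hE2 (fun j => ![1, 0] j + k j)
      have e3 := hE2 (fun j => ![0, 1] j + k j)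
      have e4 := hG k
      have e5 := hG (fun j => ![0, 1] j + k j)
      have e6 := raw0 k
      have e7 := raw0 (fun j => ![0, 1] j + k j)
      simp only at e1 e2 e3 e4 e5 e6 e7 ⊢
      rw [hcomm k] at e2
      linear_combination e3 - e2 / 2 + e6 / 2 - e7 / 2 + (s3 / 2) * e4 - (s3 / 2) * e5 - e1 / 2
      )
  set δ : ℝ := u (v₀, (0 : Fin 2 → ℤ)) 0 - u (v₀, fun j => ![0, 1] j + (0 : Fin 2 → ℤ) j) 0 with hδ
  -- affine formula for the first coordinate
  have hX := affine_of_shift (fun k => u (v₀, k) 0) 0 (-δ)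
    (by intro k; rw [raw0 k]; ring)
    (by
      intro k
      have h := hD k
      linarith)
  -- affine formula for the second coordinate
  have hY := affine_of_shift (fun k => u (v₀, k) 1) (2 * δ / s3) (δ / s3)
    (by
      intro k
      have h1 := hG k
      have h2 := hE2 k
      have h3 := hD k
      field_simp
      linear_combination s3 * h1 - 2 * h2 + 2 * h3
      )
    (by
      intro k
      have h2 := hE2 k
      have h3 := hD k
      field_simp
      linear_combination h3 - h2
      )
  -- conclude triviality
  intro v w k k'
  rw [hv v, hv w, Fin.sum_univ_two, hj0, hj0, hj1, hj1, hX k, hX k', hY k, hY k']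
  field_simp
  ring
end
end

section
/- Let Φ(z,w) be the 7 × 4 complex matrix, defined for (z,w) ∈ 𝕋², with rows (−1/2, 1/2, 1/2, −1/2), (z̄ − 1, 0, 0, 0), (0, w̄ − 1, 0, 0), (z̄ − w̄, w̄ − z̄, 0, 0), (0, 0, z̄ − 1, 0), (0, 0, 0, w̄ − 1) and (0, 0, z̄ − w̄, w̄ − z̄). Then rank Φ(z,w) = 4 for every (z,w) ∈ 𝕋² with (z,w) ≠ (1,1), while rank Φ(1,1) = 1. Consequently the crystal framework of Table 5 of the paper, whose symbol is Φ, has RUM spectrum Ω(C) = {(1,1)} yet admits nontrivial strictly periodic infinitesimal flexes, since the kernel of Φ(1,1) has dimension 3 > 2. -/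
open Filter

noncomputable section

private def M (z w : ℂ) : Matrix (Fin 7) (Fin 4) ℂ :=
      !![-(1 / 2 : ℂ), 1 / 2, 1 / 2, -(1 / 2 : ℂ);
         (starRingEnd ℂ) z - 1, 0, 0, 0;
         0, (starRingEnd ℂ) w - 1, 0, 0;
         (starRingEnd ℂ) z - (starRingEnd ℂ) w, (starRingEnd ℂ) w - (starRingEnd ℂ) z, 0, 0;
         0, 0, (starRingEnd ℂ) z - 1, 0;
         0, 0, 0, (starRingEnd ℂ) w - 1;
         0, 0, (starRingEnd ℂ) z - (starRingEnd ℂ) w, (starRingEnd ℂ) w - (starRingEnd ℂ) z]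

private lemma pair_zero {ζ ξ a b : ℂ} (hne : ζ ≠ 1 ∨ ξ ≠ 1)
    (h1 : (ζ - 1) * a = 0) (h2 : (ξ - 1) * b = 0)
    (h3 : (ζ - ξ) * a + (ξ - ζ) * b = 0) : a = 0 ∧ b = 0 := by
  rcases hne with hζ | hξ
  · have ha : a = 0 := by
      rcases mul_eq_zero.mp h1 with h | h
      · exact absurd (sub_eq_zero.mp h) hζ
      · exact h
    subst ha
    simp only [mul_zero, zero_add] at h3
    rcases mul_eq_zero.mp h3 with h | h
    · have hξζ : ξ = ζ := sub_eq_zero.mp h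
      subst hξζ
      refine ⟨rfl, ?_⟩
      rcases mul_eq_zero.mp h2 with h' | h'
      · exact absurd (sub_eq_zero.mp h') hζ
      · exact h'
    · exact ⟨rfl, h⟩
  · have hb : b = 0 := by
      rcases mul_eq_zero.mp h2 with h | h
      · exact absurd (sub_eq_zero.mp h) hξ
      · exact h
    subst hb
    simp only [mul_zero, add_zero] at h3
    rcases mul_eq_zero.mp h3 with h | h
    · have hζξ : ζ = ξ := sub_eq_zero.mp h
      subst hζξ
      refine ⟨?_, rfl⟩
      rcases mul_eq_zero.mp h1 with h' | h'
      · exact absurd (sub_eq_zero.mp h') hξ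
      · exact h'
    · exact ⟨h, rfl⟩

private lemma ker_triv {z w : ℂ} (hne : ¬(z = 1 ∧ w = 1)) {c : Fin 4 → ℂ}
    (hc : (M z w).mulVec c = 0) : c = 0 := by
  have hzw : (starRingEnd ℂ) z ≠ 1 ∨ (starRingEnd ℂ) w ≠ 1 := by
    by_contra h
    push_neg at h
    apply hne
    constructor
    · have := congrArg (starRingEnd ℂ) h.1; simpa using this
    · have := congrArg (starRingEnd ℂ) h.2; simpa using this
  have h1 : ((starRingEnd ℂ) z - 1) * c 0 = 0 := by
    have h := congrFun hc 1
    simpa only [Matrix.mulVec, dotProduct, Fin.sum_univ_four, Pi.zero_apply,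
      show M z w 1 0 = ((starRingEnd ℂ) z - 1) from rfl, show M z w 1 1 = (0) from rfl, show M z w 1 2 = (0) from rfl, show M z w 1 3 = (0) from rfl, zero_mul, add_zero, zero_add] using h
  have h2 : ((starRingEnd ℂ) w - 1) * c 1 = 0 := by
    have h := congrFun hc 2
    simpa only [Matrix.mulVec, dotProduct, Fin.sum_univ_four, Pi.zero_apply,
      show M z w 2 0 = (0) from rfl, show M z w 2 1 = ((starRingEnd ℂ) w - 1) from rfl, show M z w 2 2 = (0) from rfl, show M z w 2 3 = (0) from rfl, zero_mul, add_zero, zero_add] using h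
  have h3 : ((starRingEnd ℂ) z - (starRingEnd ℂ) w) * c 0 + ((starRingEnd ℂ) w - (starRingEnd ℂ) z) * c 1 = 0 := by
    have h := congrFun hc 3
    simpa only [Matrix.mulVec, dotProduct, Fin.sum_univ_four, Pi.zero_apply,
      show M z w 3 0 = ((starRingEnd ℂ) z - (starRingEnd ℂ) w) from rfl, show M z w 3 1 = ((starRingEnd ℂ) w - (starRingEnd ℂ) z) from rfl, show M z w 3 2 = (0) from rfl, show M z w 3 3 = (0) from rfl, zero_mul, add_zero, zero_add] using h
  have h4 : ((starRingEnd ℂ) z - 1) * c 2 = 0 := by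
    have h := congrFun hc 4
    simpa only [Matrix.mulVec, dotProduct, Fin.sum_univ_four, Pi.zero_apply,
      show M z w 4 0 = (0) from rfl, show M z w 4 1 = (0) from rfl, show M z w 4 2 = ((starRingEnd ℂ) z - 1) from rfl, show M z w 4 3 = (0) from rfl, zero_mul, add_zero, zero_add] using h
  have h5 : ((starRingEnd ℂ) w - 1) * c 3 = 0 := by
    have h := congrFun hc 5
    simpa only [Matrix.mulVec, dotProduct, Fin.sum_univ_four, Pi.zero_apply,
      show M z w 5 0 = (0) from rfl, show M z w 5 1 = (0) from rfl, show M z w 5 2 = (0) from rfl, show M z w 5 3 = ((starRingEnd ℂ) w - 1) from rfl, zero_mul, add_zero, zero_add] using h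
  have h6 : ((starRingEnd ℂ) z - (starRingEnd ℂ) w) * c 2 + ((starRingEnd ℂ) w - (starRingEnd ℂ) z) * c 3 = 0 := by
    have h := congrFun hc 6
    simpa only [Matrix.mulVec, dotProduct, Fin.sum_univ_four, Pi.zero_apply,
      show M z w 6 0 = (0) from rfl, show M z w 6 1 = (0) from rfl, show M z w 6 2 = ((starRingEnd ℂ) z - (starRingEnd ℂ) w) from rfl, show M z w 6 3 = ((starRingEnd ℂ) w - (starRingEnd ℂ) z) from rfl, zero_mul, add_zero, zero_add] using h
  obtain ⟨hc0, hc1⟩ := pair_zero hzw h1 h2 h3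
  obtain ⟨hc2, hc3⟩ := pair_zero hzw h4 h5 h6
  funext j
  fin_cases j <;> assumption


private lemma M11_row0 (c : Fin 4 → ℂ) : (M 1 1).mulVec c 0 = -(1/2)*c 0 + (1/2)*c 1 + (1/2)*c 2 + -(1/2)*c 3 := by
  simp only [Matrix.mulVec, dotProduct, Fin.sum_univ_four, show M 1 1 0 0 = (-(1 / 2 : ℂ)) from rfl, show M 1 1 0 1 = ((1 / 2 : ℂ)) from rfl, show M 1 1 0 2 = ((1 / 2 : ℂ)) from rfl, show M 1 1 0 3 = (-(1 / 2 : ℂ)) from rfl]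

private lemma M11_row1 (c : Fin 4 → ℂ) : (M 1 1).mulVec c 1 = 0 := by
  simp only [Matrix.mulVec, dotProduct, Fin.sum_univ_four, show M 1 1 1 0 = ((starRingEnd ℂ) (1:ℂ) - 1) from rfl, show M 1 1 1 1 = (0) from rfl, show M 1 1 1 2 = (0) from rfl, show M 1 1 1 3 = (0) from rfl,
    map_one, sub_self, zero_mul, mul_zero, add_zero, zero_add]

private lemma M11_row2 (c : Fin 4 → ℂ) : (M 1 1).mulVec c 2 = 0 := by
  simp only [Matrix.mulVec, dotProduct, Fin.sum_univ_four, show M 1 1 2 0 = (0) from rfl, show M 1 1 2 1 = ((starRingEnd ℂ) (1:ℂ) - 1) from rfl, show M 1 1 2 2 = (0) from rfl, show M 1 1 2 3 = (0) from rfl,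
    map_one, sub_self, zero_mul, mul_zero, add_zero, zero_add]

private lemma M11_row3 (c : Fin 4 → ℂ) : (M 1 1).mulVec c 3 = 0 := by
  simp only [Matrix.mulVec, dotProduct, Fin.sum_univ_four, show M 1 1 3 0 = ((starRingEnd ℂ) (1:ℂ) - (starRingEnd ℂ) (1:ℂ)) from rfl, show M 1 1 3 1 = ((starRingEnd ℂ) (1:ℂ) - (starRingEnd ℂ) (1:ℂ)) from rfl, show M 1 1 3 2 = (0) from rfl, show M 1 1 3 3 = (0) from rfl,
    map_one, sub_self, zero_mul, mul_zero, add_zero, zero_add]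

private lemma M11_row4 (c : Fin 4 → ℂ) : (M 1 1).mulVec c 4 = 0 := by
  simp only [Matrix.mulVec, dotProduct, Fin.sum_univ_four, show M 1 1 4 0 = (0) from rfl, show M 1 1 4 1 = (0) from rfl, show M 1 1 4 2 = ((starRingEnd ℂ) (1:ℂ) - 1) from rfl, show M 1 1 4 3 = (0) from rfl,
    map_one, sub_self, zero_mul, mul_zero, add_zero, zero_add]

private lemma M11_row5 (c : Fin 4 → ℂ) : (M 1 1).mulVec c 5 = 0 := by
  simp only [Matrix.mulVec, dotProduct, Fin.sum_univ_four, show M 1 1 5 0 = (0) from rfl, show M 1 1 5 1 = (0) from rfl, show M 1 1 5 2 = (0) from rfl, show M 1 1 5 3 = ((starRingEnd ℂ) (1:ℂ) - 1) from rfl,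
    map_one, sub_self, zero_mul, mul_zero, add_zero, zero_add]

private lemma M11_row6 (c : Fin 4 → ℂ) : (M 1 1).mulVec c 6 = 0 := by
  simp only [Matrix.mulVec, dotProduct, Fin.sum_univ_four, show M 1 1 6 0 = (0) from rfl, show M 1 1 6 1 = (0) from rfl, show M 1 1 6 2 = ((starRingEnd ℂ) (1:ℂ) - (starRingEnd ℂ) (1:ℂ)) from rfl, show M 1 1 6 3 = ((starRingEnd ℂ) (1:ℂ) - (starRingEnd ℂ) (1:ℂ)) from rfl,
    map_one, sub_self, zero_mul, mul_zero, add_zero, zero_add]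

private lemma M11_ker : Module.finrank ℂ (LinearMap.ker (M 1 1).mulVecLin) = 3 := by
  set f := (M 1 1).mulVecLin with hf
  set g := (LinearMap.proj (0 : Fin 7) : ((Fin 7) → ℂ) →ₗ[ℂ] ℂ).comp f with hg
  have hker : LinearMap.ker f = LinearMap.ker g := by
    ext x
    simp only [LinearMap.mem_ker, hg, LinearMap.comp_apply, LinearMap.proj_apply, hf,
      Matrix.mulVecLin_apply]
    constructor
    · intro h; rw [h]; rfl
    · intro h
      funext i
      fin_cases i
      · exact (M11_row0 x).symm ▸ h
      · exact M11_row1 x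
      · exact M11_row2 x
      · exact M11_row3 x
      · exact M11_row4 x
      · exact M11_row5 x
      · exact M11_row6 x
  have hsurj : Function.Surjective g := by
    intro c
    refine ⟨![0, 2*c, 0, 0], ?_⟩
    show (M 1 1).mulVec ![0, 2*c, 0, 0] 0 = c
    rw [M11_row0]
    simp only [Matrix.cons_val_zero, Matrix.cons_val_one, Matrix.head_cons, Matrix.cons_val_two,
      Matrix.tail_cons, Matrix.cons_val_three]
    ring
  have hrange : LinearMap.range g = ⊤ := LinearMap.range_eq_top.mpr hsurj
  have h4 := LinearMap.finrank_range_add_finrank_ker g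
  rw [hrange] at h4
  simp only [finrank_top, Module.finrank_self, Module.finrank_fintype_fun_eq_card,
    Fintype.card_fin] at h4
  rw [hker]
  omega

private lemma M11_rank : (M 1 1).rank = 1 := by
  have h4 := LinearMap.finrank_range_add_finrank_ker (M 1 1).mulVecLin
  rw [M11_ker] at h4
  simp only [Module.finrank_fintype_fun_eq_card, Fintype.card_fin] at h4
  have hdef : (M 1 1).rank = Module.finrank ℂ (LinearMap.range (M 1 1).mulVecLin) := rfl
  omega

private lemma M_rank {z w : ℂ} (hne : ¬(z = 1 ∧ w = 1)) : (M z w).rank = 4 := by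
  have hker : LinearMap.ker (M z w).mulVecLin = ⊥ :=
    LinearMap.ker_eq_bot'.mpr fun c hc => ker_triv hne (by simpa [Matrix.mulVecLin_apply] using hc)
  have h4 := LinearMap.finrank_range_add_finrank_ker (M z w).mulVecLin
  rw [hker] at h4
  simp only [finrank_bot, Module.finrank_fintype_fun_eq_card, Fintype.card_fin] at h4
  have hdef : (M z w).rank = Module.finrank ℂ (LinearMap.range (M z w).mulVecLin) := rfl
  omega


section Aux
open CrystalFramework

private lemma zpowVec_add {d : ℕ} {ω : Fin d → ℂ} (hω : ∀ j, ω j ≠ 0) (l k : Fin d → ℤ) :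
    zpowVec ω (fun j => l j + k j) = zpowVec ω l * zpowVec ω k := by
  unfold zpowVec
  rw [← Finset.prod_mul_distrib]
  exact Finset.prod_congr rfl fun j _ => zpow_add₀ (hω j) _ _

private lemma zpowVec_zero {d : ℕ} (ω : Fin d → ℂ) : zpowVec ω (fun _ => 0) = 1 := by
  simp [zpowVec]

private lemma zpowVec_one {d : ℕ} (k : Fin d → ℤ) : zpowVec (fun _ => (1:ℂ)) k = 1 := by
  simp [zpowVec]

private lemma symbol_sum {d : ℕ} (C : CrystalFramework d) (ω : Fin d → ℂ)
    (b : C.V → Fin d → ℂ) (e : C.E) :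
    ∑ xi : C.V × Fin d, C.symbol (fun j => (starRingEnd ℂ) (ω j)) e xi * b xi.1 xi.2 =
      zpowVec ω (C.fst e).2 * (∑ i, (C.edgeVec e i : ℂ) * b (C.fst e).1 i) -
      zpowVec ω (C.snd e).2 * (∑ i, (C.edgeVec e i : ℂ) * b (C.snd e).1 i) := by
  have hconj : (fun j => (starRingEnd ℂ) ((fun j => (starRingEnd ℂ) (ω j)) j)) = ω := by
    funext j; exact Complex.conj_conj _
  calc ∑ xi : C.V × Fin d, C.symbol (fun j => (starRingEnd ℂ) (ω j)) e xi * b xi.1 xi.2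
      = ∑ x : C.V, ∑ i : Fin d,
          ((if x = (C.fst e).1 then
              zpowVec ω (C.fst e).2 * ((C.edgeVec e i : ℂ) * b x i) else 0) -
           (if x = (C.snd e).1 then
              zpowVec ω (C.snd e).2 * ((C.edgeVec e i : ℂ) * b x i) else 0)) := by
        rw [Fintype.sum_prod_type]
        refine Finset.sum_congr rfl fun x _ => Finset.sum_congr rfl fun i _ => ?_
        simp only [CrystalFramework.symbol, Matrix.of_apply, hconj]
        split_ifs <;> ring
    _ = ∑ x : C.V,
          ((if x = (C.fst e).1 then
              zpowVec ω (C.fst e).2 * ∑ i, (C.edgeVec e i : ℂ) * b x i else 0) -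
           (if x = (C.snd e).1 then
              zpowVec ω (C.snd e).2 * ∑ i, (C.edgeVec e i : ℂ) * b x i else 0)) := by
        refine Finset.sum_congr rfl fun x _ => ?_
        rw [Finset.sum_sub_distrib, Finset.sum_ite_irrel, Finset.sum_ite_irrel,
          ← Finset.mul_sum, ← Finset.mul_sum]
        simp
    _ = _ := by
        rw [Finset.sum_sub_distrib, Finset.sum_ite_eq' Finset.univ (C.fst e).1,
          Finset.sum_ite_eq' Finset.univ (C.snd e).1]
        simp

private lemma flex_term {d : ℕ} (C : CrystalFramework d) {ω : Fin d → ℂ} (hω : ∀ j, ω j ≠ 0)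
    (b : C.V → Fin d → ℂ) (e : C.E) (k : Fin d → ℤ) :
    ∑ i, (C.edgeVec e i : ℂ) *
      (C.phaseField ω b ((C.fst e).1, fun j => (C.fst e).2 j + k j) i -
       C.phaseField ω b ((C.snd e).1, fun j => (C.snd e).2 j + k j) i) =
    zpowVec ω k *
      ∑ xi : C.V × Fin d, C.symbol (fun j => (starRingEnd ℂ) (ω j)) e xi * b xi.1 xi.2 := by
  rw [symbol_sum]
  simp only [CrystalFramework.phaseField, zpowVec_add hω]
  simp only [mul_sub, Finset.mul_sum, ← Finset.sum_sub_distrib]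
  refine Finset.sum_congr rfl fun i _ => by ring

private lemma flex_iff {d : ℕ} (C : CrystalFramework d) {ω : Fin d → ℂ} (hω : ∀ j, ω j ≠ 0)
    (b : C.V → Fin d → ℂ) :
    C.IsFlex (C.phaseField ω b) ↔
      ∀ e : C.E,
        ∑ xi : C.V × Fin d, C.symbol (fun j => (starRingEnd ℂ) (ω j)) e xi * b xi.1 xi.2 = 0 := by
  constructor
  · intro h e
    have h0 := h e (fun _ => 0)
    rw [flex_term C hω] at h0
    rcases mul_eq_zero.mp h0 with h' | h'
    · exact absurd h' (by
        rw [zpowVec_zero]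
        exact one_ne_zero)
    · exact h'
  · intro h e k
    rw [flex_term C hω, h e, mul_zero]

end Aux


private def pairIdx {V : Type} (eV : V ≃ Fin 2) (xi : V × Fin 2) : Fin 4 :=
  ⟨2 * ((eV xi.1 : Fin 2) : ℕ) + ((xi.2 : Fin 2) : ℕ), by
    have h1 := (eV xi.1).isLt; have h2 := xi.2.isLt; omega⟩

private lemma pairIdx_bij {V : Type} [Fintype V] [DecidableEq V] (eV : V ≃ Fin 2) :
    Function.Bijective (pairIdx eV) := by
  rw [Fintype.bijective_iff_injective_and_card]
  refine ⟨?_, by simp [Fintype.card_congr eV]⟩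
  rintro ⟨x, i⟩ ⟨y, j⟩ h
  simp only [pairIdx, Fin.mk.injEq] at h
  have h1 := (eV x).isLt
  have h2 := (eV y).isLt
  have h3 := i.isLt
  have h4 := j.isLt
  have hxy : ((eV x : Fin 2) : ℕ) = ((eV y : Fin 2) : ℕ) ∧ (i : ℕ) = (j : ℕ) := by omega
  have hx : x = y := eV.injective (Fin.ext hxy.1)
  have hi : i = j := Fin.ext hxy.2
  rw [hx, hi]

private def cvec {V : Type} (eV : V ≃ Fin 2) (b : V → Fin 2 → ℂ) (n : Fin 4) : ℂ :=
  b (eV.symm ⟨(n : ℕ) / 2, by have := n.isLt; omega⟩) ⟨(n : ℕ) % 2, by omega⟩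

private lemma cvec_pairIdx {V : Type} (eV : V ≃ Fin 2) (b : V → Fin 2 → ℂ)
    (x : V) (i : Fin 2) : cvec eV b (pairIdx eV (x, i)) = b x i := by
  unfold cvec pairIdx
  have h2 := i.isLt
  have e1 : (⟨(2 * ((eV x : Fin 2) : ℕ) + (i : ℕ)) / 2, by omega⟩ : Fin 2) = eV x :=
    Fin.ext (by simp only []; omega)
  have e2 : (⟨(2 * ((eV x : Fin 2) : ℕ) + (i : ℕ)) % 2, by omega⟩ : Fin 2) = i :=
    Fin.ext (by simp only []; omega)
  rw [e1, e2, Equiv.symm_apply_apply]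


/-- For the given `7 × 4` symbol matrix `Φ`: `rank Φ(z,w) = 4` at
every point of `𝕋²` other than `(1,1)`, while `rank Φ(1,1) = 1`; consequently any
crystal framework with this symbol has RUM spectrum `{(1,1)}` yet admits nontrivial
strictly periodic infinitesimal flexes, the kernel of `Φ(1,1)` having dimension
`3 > 2`. -/
theorem RUM_singleton_with_nontrivial_periodic_flex
    (Φ : ℂ → ℂ → Matrix (Fin 7) (Fin 4) ℂ)
    (hΦ : ∀ z w : ℂ, Φ z w =
      !![-(1 / 2 : ℂ), 1 / 2, 1 / 2, -(1 / 2 : ℂ);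
         (starRingEnd ℂ) z - 1, 0, 0, 0;
         0, (starRingEnd ℂ) w - 1, 0, 0;
         (starRingEnd ℂ) z - (starRingEnd ℂ) w, (starRingEnd ℂ) w - (starRingEnd ℂ) z, 0, 0;
         0, 0, (starRingEnd ℂ) z - 1, 0;
         0, 0, 0, (starRingEnd ℂ) w - 1;
         0, 0, (starRingEnd ℂ) z - (starRingEnd ℂ) w, (starRingEnd ℂ) w - (starRingEnd ℂ) z])
    (C : CrystalFramework 2) (eV : C.V ≃ Fin 2) (eE : C.E ≃ Fin 7)
    (hsym : ∀ z w : ℂ, ‖z‖ = 1 → ‖w‖ = 1 →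
      ∀ (e : C.E) (x : C.V) (i : Fin 2),
        C.symbol ![z, w] e (x, i) =
          Φ z w (eE e)
            ⟨2 * ((eV x : Fin 2) : ℕ) + (i : ℕ),
              by have h1 := (eV x).isLt; have h2 := i.isLt; omega⟩) :
    (∀ z w : ℂ, ‖z‖ = 1 → ‖w‖ = 1 → ¬(z = 1 ∧ w = 1) →
      (Φ z w).rank = 4) ∧
    (Φ 1 1).rank = 1 ∧
    Module.finrank ℂ (LinearMap.ker (Φ 1 1).mulVecLin) = 3 ∧
    C.RUM = ({![1, 1]} : Set (Fin 2 → ℂ)) ∧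
    ∃ u : C.V × (Fin 2 → ℤ) → Fin 2 → ℂ,
      C.StrictlyPeriodic u ∧ C.IsFlex u ∧ ¬ C.IsTrivial u := by

  classical
  have hM : ∀ z w : ℂ, Φ z w = M z w := hΦ
  have hsum : ∀ z w : ℂ, ‖z‖ = 1 → ‖w‖ = 1 →
      ∀ (b : C.V → Fin 2 → ℂ) (e : C.E),
      (∑ xi : C.V × Fin 2, C.symbol ![z, w] e xi * b xi.1 xi.2) =
        (M z w).mulVec (cvec eV b) (eE e) := by
    intro z w hz hw b e
    have hrhs : (M z w).mulVec (cvec eV b) (eE e) =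
        ∑ n : Fin 4, M z w (eE e) n * cvec eV b n := rfl
    rw [hrhs]
    refine Fintype.sum_bijective (pairIdx eV) (pairIdx_bij eV) _ _ ?_
    rintro ⟨x, i⟩
    rw [hsym z w hz hw e x i, hM, cvec_pairIdx]
    rfl
  have habs_ne : ∀ {ζ : ℂ}, ‖ζ‖ = 1 → ζ ≠ 0 := by
    intro ζ h h0
    rw [h0] at h
    simp at h
  have honevec : (fun j : Fin 2 => (starRingEnd ℂ) ((![1,1] : Fin 2 → ℂ) j)) =
      (![1,1] : Fin 2 → ℂ) := by
    funext j; fin_cases j <;> simp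
  have hone_ne : ∀ j : Fin 2, (![1,1] : Fin 2 → ℂ) j ≠ 0 := by
    intro j; fin_cases j <;> simp
  have hM11zero : ∀ c : Fin 4 → ℂ,
      -(1/2)*c 0 + (1/2)*c 1 + (1/2)*c 2 + -(1/2)*c 3 = 0 → (M 1 1).mulVec c = 0 := by
    intro c h0
    funext i
    fin_cases i
    · simpa using (M11_row0 c).trans h0
    · simpa using M11_row1 c
    · simpa using M11_row2 c
    · simpa using M11_row3 c
    · simpa using M11_row4 c
    · simpa using M11_row5 c
    · simpa using M11_row6 c
  -- (1,1) belongs to the RUM spectrum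
  have hmem : (![1,1] : Fin 2 → ℂ) ∈ C.RUM := by
    refine ⟨fun j => by fin_cases j <;> simp, fun _ _ => 1, ?_, ?_⟩
    · intro h
      exact one_ne_zero (congrFun (congrFun h (eV.symm 0)) 0)
    · rw [flex_iff C hone_ne]
      intro e
      rw [honevec]
      have hs := hsum 1 1 (by simp) (by simp) (fun _ _ => 1) e
      rw [hs]
      have hc : (M 1 1).mulVec (cvec eV fun _ _ => (1:ℂ)) = 0 := by
        refine hM11zero _ ?_
        show -(1/2)*(1:ℂ) + (1/2)*1 + (1/2)*1 + -(1/2)*1 = 0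
        ring
      exact congrFun hc (eE e)
  -- RUM is contained in {(1,1)}
  have hsub : C.RUM ⊆ ({![1, 1]} : Set (Fin 2 → ℂ)) := by
    intro ω hω
    obtain ⟨htor, b, hb, hflex⟩ := hω
    have hne : ∀ j, ω j ≠ 0 := fun j => habs_ne (htor j)
    rw [flex_iff C hne] at hflex
    have hzw : (fun j => (starRingEnd ℂ) (ω j)) =
        ![(starRingEnd ℂ) (ω 0), (starRingEnd ℂ) (ω 1)] := by
      funext j; fin_cases j <;> rfl
    rw [hzw] at hflex
    have hz : ‖(starRingEnd ℂ) (ω 0)‖ = 1 := by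
      rw [Complex.norm_conj]; exact htor 0
    have hw : ‖(starRingEnd ℂ) (ω 1)‖ = 1 := by
      rw [Complex.norm_conj]; exact htor 1
    have hker : (M ((starRingEnd ℂ) (ω 0)) ((starRingEnd ℂ) (ω 1))).mulVec (cvec eV b) = 0 := by
      funext i
      have h := hflex (eE.symm i)
      rw [hsum _ _ hz hw b (eE.symm i), Equiv.apply_symm_apply] at h
      simpa using h
    have h11 : (starRingEnd ℂ) (ω 0) = 1 ∧ (starRingEnd ℂ) (ω 1) = 1 := by
      by_contra hcon
      have hc0 := ker_triv hcon hker
      apply hb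
      funext x i
      have h := congrFun hc0 (pairIdx eV (x, i))
      rw [cvec_pairIdx] at h
      simpa using h
    have hω0 : ω 0 = 1 := by
      have := congrArg (starRingEnd ℂ) h11.1
      simpa using this
    have hω1 : ω 1 = 1 := by
      have := congrArg (starRingEnd ℂ) h11.2
      simpa using this
    simp only [Set.mem_singleton_iff]
    funext j
    fin_cases j
    · simpa using hω0
    · simpa using hω1
  have hRUM : C.RUM = ({![1, 1]} : Set (Fin 2 → ℂ)) :=
    Set.Subset.antisymm hsub (Set.singleton_subset_iff.mpr hmem)
  -- the strictly periodic nontrivial flex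
  have hzp1 : ∀ k : Fin 2 → ℤ, zpowVec (![1,1] : Fin 2 → ℂ) k = 1 := by
    intro k
    have h1 : (![1,1] : Fin 2 → ℂ) = fun _ => 1 := by funext j; fin_cases j <;> rfl
    rw [h1]
    exact zpowVec_one k
  refine ⟨fun z w _ _ hne => by rw [hM]; exact M_rank hne,
    by rw [hM]; exact M11_rank, by rw [hM]; exact M11_ker, hRUM, ?_⟩
  set b₂ : C.V → Fin 2 → ℂ := fun x _ => if eV x = 0 then 1 else 0 with hb₂
  refine ⟨C.phaseField ![1,1] b₂, ?_, ?_, ?_⟩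
  · intro v k
    funext i
    simp [CrystalFramework.phaseField, hzp1]
  · rw [flex_iff C hone_ne]
    intro e
    rw [honevec, hsum 1 1 (by simp) (by simp)]
    have hc : (M 1 1).mulVec (cvec eV b₂) = 0 := by
      refine hM11zero _ ?_
      have c0 : cvec eV b₂ 0 = 1 := by
        simp only [cvec, hb₂, Equiv.apply_symm_apply]; rw [if_pos (by decide)]
      have c1 : cvec eV b₂ 1 = 1 := by
        simp only [cvec, hb₂, Equiv.apply_symm_apply]; rw [if_pos (by decide)]
      have c2 : cvec eV b₂ 2 = 0 := by
        simp only [cvec, hb₂, Equiv.apply_symm_apply]; rw [if_neg (by decide)]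
      have c3 : cvec eV b₂ 3 = 0 := by
        simp only [cvec, hb₂, Equiv.apply_symm_apply]; rw [if_neg (by decide)]
      rw [c0, c1, c2, c3]
      ring
    exact congrFun hc (eE e)
  · intro htriv
    have hbv : ∀ (k : Fin 2 → ℤ) (i : Fin 2), C.phaseField ![1,1] b₂ (eV.symm 0, k) i = 1 := by
      intro k i
      simp [CrystalFramework.phaseField, hzp1, hb₂]
    have hbw : ∀ (k : Fin 2 → ℤ) (i : Fin 2), C.phaseField ![1,1] b₂ (eV.symm 1, k) i = 0 := by
      intro k i
      simp [CrystalFramework.phaseField, hzp1, hb₂]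
    have key : ∀ k k' : Fin 2 → ℤ,
        ∑ i, (C.joint (eV.symm 0) k i - C.joint (eV.symm 1) k' i) = 0 := by
      intro k k'
      have h := htriv (eV.symm 0) (eV.symm 1) k k'
      simp only [hbv, hbw, sub_zero, mul_one] at h
      exact_mod_cast h
    have h00 := key (fun _ => 0) (fun _ => 0)
    have hA := key ![1, 0] (fun _ => 0)
    have hB := key ![0, 1] (fun _ => 0)
    simp only [CrystalFramework.joint, Fin.sum_univ_two, Matrix.cons_val_zero,
      Matrix.cons_val_one, Matrix.head_cons, Int.cast_zero, Int.cast_one, zero_mul, one_mul,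
      add_zero, zero_add] at h00 hA hB
    have ha0 : C.a 0 0 + C.a 0 1 = 0 := by linarith
    have ha1 : C.a 1 0 + C.a 1 1 = 0 := by linarith
    have hg := Fintype.linearIndependent_iff.mp C.indep ![-(C.a 1 0), C.a 0 0] ?_
    · have ha00 : C.a 0 0 = 0 := by simpa using hg 1
      have hA0 : C.a 0 = 0 := by
        funext i
        fin_cases i
        · show C.a 0 0 = 0
          exact ha00
        · show C.a 0 1 = 0
          linarith
      exact C.indep.ne_zero 0 hA0
    · rw [Fin.sum_univ_two]
      funext i
      fin_cases i
      · show -(C.a 1 0) * C.a 0 0 + C.a 0 0 * C.a 1 0 = 0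
        ring
      · show -(C.a 1 0) * C.a 0 1 + C.a 0 0 * C.a 1 1 = 0
        linear_combination (-(C.a 1 0)) * ha0 + C.a 0 0 * ha1
end
end

section
/- Let C be a crystal framework in ℝ^d with |E₀| = d|V₀| (Maxwell counting equilibrium), so that its symbol Φ_C(z) is a square matrix. Define the product framework C̃ in ℝ^{d+1} with the same motif vertex set V₀, placement p̃(v) = (p(v), 0), lattice vectors ã_j = (a_j, 0) for 1 ≤ j ≤ d and ã_{d+1} = (0,…,0,1), and motif edges: for each motif edge ((v,l),(w,m)) of C the edge ((v,(l,0)),(w,(m,0))), together with for each v ∈ V₀ the vertical edge ((v,0),(v,ε_{d+1})), where ε_{d+1} = (0,…,0,1) ∈ ℤ^{d+1}. Then for all (z₁,…,z_d,z_{d+1}) ∈ 𝕋^{d+1}, det Φ_{C̃}(z₁,…,z_d,z_{d+1}) = ± (z̄_{d+1} − 1)^{|V₀|} · det Φ_C(z₁,…,z_d), where the sign ±1 depends only on the chosen orderings of the rows and columns of the two symbol matrices. -/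
open Filter

noncomputable section

/-- Auxiliary column-reindexing equivalence. -/
def prodColEquiv {d : ℕ} {V W : Type} (eV : W ≃ V) :
    ((V × Fin d) ⊕ V) ≃ W × Fin (d + 1) where
  toFun := Sum.elim (fun vi => (eV.symm vi.1, vi.2.castSucc)) (fun v => (eV.symm v, Fin.last d))
  invFun := fun wj => Fin.lastCases (Sum.inr (eV wj.1)) (fun i => Sum.inl (eV wj.1, i)) wj.2
  left_inv := by rintro (⟨v, i⟩ | v) <;> simp
  right_inv := by
    rintro ⟨w, j⟩
    induction j using Fin.lastCases <;> simp

@[simp] lemma prodColEquiv_symm_castSucc {d : ℕ} {V W : Type} (eV : W ≃ V)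
    (w : W) (i : Fin d) : (prodColEquiv eV).symm (w, i.castSucc) = Sum.inl (eV w, i) := by
  simp [prodColEquiv]

@[simp] lemma prodColEquiv_symm_last {d : ℕ} {V W : Type} (eV : W ≃ V)
    (w : W) : (prodColEquiv eV).symm (w, Fin.last d) = Sum.inr (eV w) := by
  simp [prodColEquiv]

lemma det_submatrix_sign {n m : Type} [DecidableEq n] [Fintype n] [DecidableEq m] [Fintype m]
    (N : Matrix m m ℂ) (e₁ e₂ : n ≃ m) :
    (N.submatrix e₁ e₂).det
      = ((Equiv.Perm.sign (e₁.trans e₂.symm) : ℤ) : ℂ) * N.det := by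
  have h1 : (N.submatrix e₁ e₂).det
      = (((N.submatrix e₂ e₂).submatrix (e₁.trans e₂.symm) id)).det := by
    congr 1
    ext i j
    simp
  rw [h1, Matrix.det_permute, Matrix.det_submatrix_equiv_self]

/-- Let `C` be a crystal framework in `ℝ^d` in Maxwell counting
equilibrium (`|E₀| = d|V₀|`, witnessed by the equiv `eSqC`) and let `Ct` be the
product framework `C × C_ℤ` in `ℝ^{d+1}` (same motif vertices, placements and
lattice vectors padded by `0`, a new vertical lattice vector `e_{d+1}`, the old
motif edges padded by `0`, and a vertical edge `((v,0),(v,ε_{d+1}))` for each `v`).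
Then `det Φ_{Ct}(z, z_{d+1}) = ± (z̄_{d+1} - 1)^{|V₀|} det Φ_C(z)`, the sign
depending only on the chosen orderings of rows and columns. -/
theorem product_framework_symbol_det {d : ℕ}
    (C : CrystalFramework d) (Ct : CrystalFramework (d + 1))
    (eV : Ct.V ≃ C.V) (eE : Ct.E ≃ C.E ⊕ C.V)
    (hp : ∀ v : Ct.V, Ct.p v = Fin.snoc (C.p (eV v)) 0)
    (ha : ∀ j : Fin d, Ct.a j.castSucc = Fin.snoc (C.a j) 0)
    (halast : Ct.a (Fin.last d) = Fin.snoc (0 : Fin d → ℝ) 1)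
    (hE1 : ∀ e : C.E,
      Ct.fst (eE.symm (Sum.inl e)) = (eV.symm (C.fst e).1, Fin.snoc (C.fst e).2 0) ∧
      Ct.snd (eE.symm (Sum.inl e)) = (eV.symm (C.snd e).1, Fin.snoc (C.snd e).2 0))
    (hE2 : ∀ v : C.V,
      Ct.fst (eE.symm (Sum.inr v)) = (eV.symm v, 0) ∧
      Ct.snd (eE.symm (Sum.inr v)) = (eV.symm v, Fin.snoc (0 : Fin d → ℤ) 1))
    (eSqC : C.E ≃ C.V × Fin d) (eSq : Ct.E ≃ Ct.V × Fin (d + 1)) :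
    ∃ s : ℂ, (s = 1 ∨ s = -1) ∧
      ∀ z : Fin (d + 1) → ℂ, OnTorus z →
        Matrix.det (Matrix.of fun i j : Ct.V × Fin (d + 1) =>
            Ct.symbol z (eSq.symm i) j) =
          s * ((starRingEnd ℂ) (z (Fin.last d)) - 1) ^ Fintype.card C.V *
            Matrix.det (Matrix.of fun i j : C.V × Fin d =>
              C.symbol (fun t => z t.castSucc) (eSqC.symm i) j) := by
  classical
  set colEquiv : ((C.V × Fin d) ⊕ C.V) ≃ Ct.V × Fin (d + 1) := prodColEquiv eV with hcol
  set rowEquiv : Ct.E ≃ (C.V × Fin d) ⊕ C.V :=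
    eE.trans (Equiv.sumCongr eSqC (Equiv.refl C.V)) with hrow
  set σ : Equiv.Perm (Ct.V × Fin (d + 1)) := (eSq.symm.trans rowEquiv).trans colEquiv with hσ
  refine ⟨((Equiv.Perm.sign σ : ℤ) : ℂ), ?_, ?_⟩
  · rcases Int.units_eq_one_or (Equiv.Perm.sign σ) with h | h <;> rw [h] <;> simp
  intro z _
  set z' : Fin d → ℂ := fun t => z t.castSucc with hz'
  set A : Matrix (C.V × Fin d) (C.V × Fin d) ℂ :=
    Matrix.of fun i j : C.V × Fin d => C.symbol z' (eSqC.symm i) j with hA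
  set c : ℂ := (starRingEnd ℂ) (z (Fin.last d)) - 1 with hc
  set Dm : Matrix C.V C.V ℂ := c • (1 : Matrix C.V C.V ℂ) with hD
  set B : Matrix ((C.V × Fin d) ⊕ C.V) ((C.V × Fin d) ⊕ C.V) ℂ :=
    Matrix.fromBlocks A 0 0 Dm with hB
  -- power computations
  have hzsnoc : ∀ l : Fin d → ℤ,
      zpowVec (fun j => (starRingEnd ℂ) (z j)) (Fin.snoc l 0)
        = zpowVec (fun j => (starRingEnd ℂ) (z' j)) l := by
    intro l
    simp [zpowVec, Fin.prod_univ_castSucc, hz']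
  have hz0 : zpowVec (fun j => (starRingEnd ℂ) (z j)) (0 : Fin (d + 1) → ℤ) = 1 := by
    simp [zpowVec]
  have hzeps : zpowVec (fun j => (starRingEnd ℂ) (z j)) (Fin.snoc (0 : Fin d → ℤ) 1)
      = (starRingEnd ℂ) (z (Fin.last d)) := by
    simp [zpowVec, Fin.prod_univ_castSucc]
  -- joint computations
  have hj1 : ∀ (v : C.V) (l : Fin d → ℤ) (i : Fin d),
      Ct.joint (eV.symm v) (Fin.snoc l 0) i.castSucc = C.joint v l i := by
    intro v l i
    simp [CrystalFramework.joint, hp, Fin.sum_univ_castSucc, ha]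
  have hj2 : ∀ (v : C.V) (l : Fin d → ℤ),
      Ct.joint (eV.symm v) (Fin.snoc l 0) (Fin.last d) = 0 := by
    intro v l
    simp [CrystalFramework.joint, hp, Fin.sum_univ_castSucc, ha, halast]
  -- edge vector computations
  have hEold : ∀ (e : C.E) (i : Fin d),
      Ct.edgeVec (eE.symm (Sum.inl e)) i.castSucc = C.edgeVec e i := by
    intro e i
    simp [CrystalFramework.edgeVec, (hE1 e).1, (hE1 e).2, hj1]
  have hEold0 : ∀ e : C.E, Ct.edgeVec (eE.symm (Sum.inl e)) (Fin.last d) = 0 := by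
    intro e
    simp [CrystalFramework.edgeVec, (hE1 e).1, (hE1 e).2, hj2]
  have hEvert : ∀ (v : C.V) (i : Fin d),
      Ct.edgeVec (eE.symm (Sum.inr v)) i.castSucc = 0 := by
    intro v i
    simp [CrystalFramework.edgeVec, (hE2 v).1, (hE2 v).2, CrystalFramework.joint,
      Fin.sum_univ_castSucc, ha, halast]
  have hEvert1 : ∀ v : C.V, Ct.edgeVec (eE.symm (Sum.inr v)) (Fin.last d) = -1 := by
    intro v
    simp [CrystalFramework.edgeVec, (hE2 v).1, (hE2 v).2, CrystalFramework.joint,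
      Fin.sum_univ_castSucc, ha, halast]
  -- pointwise identification of the symbol with the block matrix
  have hsym : ∀ (y : C.E ⊕ C.V) (w : Ct.V) (j : Fin (d + 1)),
      Ct.symbol z (eE.symm y) (w, j) = B (Sum.map eSqC id y) (colEquiv.symm (w, j)) := by
    intro y w j
    induction j using Fin.lastCases with
    | last =>
      rw [hcol, prodColEquiv_symm_last]
      cases y with
      | inl e =>
        have : B (Sum.map eSqC id (Sum.inl e)) (Sum.inr (eV w)) = 0 := by
          simp [hB, Matrix.fromBlocks]
        rw [this]
        simp [CrystalFramework.symbol, hEold0]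
      | inr v =>
        have hBv : B (Sum.map eSqC id (Sum.inr v)) (Sum.inr (eV w))
            = c * (if v = eV w then 1 else 0) := by
          simp [hB, Matrix.fromBlocks, hD, Matrix.one_apply]
        rw [hBv]
        simp only [CrystalFramework.symbol, Matrix.of_apply, (hE2 v).1, (hE2 v).2,
          hEvert1, hz0, hzeps]
        have hiff : (w = eV.symm v) ↔ (v = eV w) := by
          rw [Equiv.eq_symm_apply, eq_comm]
        by_cases h : v = eV w
        · rw [if_pos ((hiff).mpr h), if_pos ((hiff).mpr h), if_pos h]
          push_cast
          rw [hc]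
          ring
        · rw [if_neg fun hh => h (hiff.mp hh), if_neg fun hh => h (hiff.mp hh), if_neg h]
          simp
    | cast i =>
      rw [hcol, prodColEquiv_symm_castSucc]
      cases y with
      | inl e =>
        have hBv : B (Sum.map eSqC id (Sum.inl e)) (Sum.inl (eV w, i))
            = C.symbol z' e (eV w, i) := by
          simp [hB, Matrix.fromBlocks, hA]
        rw [hBv]
        simp only [CrystalFramework.symbol, Matrix.of_apply, (hE1 e).1, (hE1 e).2,
          hEold, hzsnoc]
        have h1 : (w = eV.symm (C.fst e).1) ↔ (eV w = (C.fst e).1) := Equiv.eq_symm_apply eV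
        have h2 : (w = eV.symm (C.snd e).1) ↔ (eV w = (C.snd e).1) := Equiv.eq_symm_apply eV
        rw [show (if w = eV.symm (C.fst e).1 then
              zpowVec (fun j => (starRingEnd ℂ) (z' j)) (C.fst e).2 else 0)
            = (if eV w = (C.fst e).1 then
              zpowVec (fun j => (starRingEnd ℂ) (z' j)) (C.fst e).2 else 0) by
            simp [h1],
          show (if w = eV.symm (C.snd e).1 then
              zpowVec (fun j => (starRingEnd ℂ) (z' j)) (C.snd e).2 else 0)
            = (if eV w = (C.snd e).1 then
              zpowVec (fun j => (starRingEnd ℂ) (z' j)) (C.snd e).2 else 0) by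
            simp [h2]]
      | inr v =>
        have : B (Sum.map eSqC id (Sum.inr v)) (Sum.inl (eV w, i)) = 0 := by
          simp [hB, Matrix.fromBlocks]
        rw [this]
        simp [CrystalFramework.symbol, hEvert]
  -- assemble
  have hM : (Matrix.of fun i j : Ct.V × Fin (d + 1) => Ct.symbol z (eSq.symm i) j)
      = B.submatrix (eSq.symm.trans rowEquiv) colEquiv.symm := by
    ext i x
    obtain ⟨w, j⟩ := x
    have h := hsym (eE (eSq.symm i)) w j
    rw [Equiv.symm_apply_apply] at h
    simpa [hrow, Matrix.submatrix_apply] using h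
  rw [hM, det_submatrix_sign]
  have hperm : ((eSq.symm.trans rowEquiv).trans colEquiv.symm.symm) = σ := by
    rw [hσ]; rfl
  rw [hperm, hB, Matrix.det_fromBlocks_zero₂₁, hD, Matrix.det_smul, Matrix.det_one]
  rw [hA]
  ring
end
end
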